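/- arXiv:2310.15341 — 6 statements merged into one kernel-verified Lean document; each statement's English description precedes it below -/
import Mathlib

section
/- Let A, M₁, …, M_k, L be n×n real matrices such that A ≤ M₁M₂⋯M_k L entrywise, each M₁, …, M_k is a nonsingular M-matrix, and the off-diagonal part of L is nonpositive (L_a ≤ 0). Assume there exists a nonzero vector e ≥ 0 with Ae ≥ 0 such that at least one of the matrices M₁, …, M_k, L connects N⁰(Ae) with N⁺(Ae). Then M_k⁻¹M_{k−1}⁻¹⋯M₁⁻¹A is a nonsingular M-matrix; in particular A is invertible and A⁻¹ ≥ 0 entrywise. -/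
open Matrix

/-- A real square matrix is a nonsingular M-matrix if its off-diagonal entries are
nonpositive, it is invertible, and all entries of its inverse are nonnegative. -/
def IsNonsingMMatrix {n : ℕ} (M : Matrix (Fin n) (Fin n) ℝ) : Prop :=
  (∀ i j, i ≠ j → M i j ≤ 0) ∧ IsUnit M.det ∧ ∀ i j, 0 ≤ M⁻¹ i j

/-- `A` connects `N1` with `N2`: from every index in `N1` there is a path of
nonzero entries of `A` of length `r ≥ 1` ending in `N2`. -/
def Connects {n : ℕ} (A : Matrix (Fin n) (Fin n) ℝ) (N1 N2 : Set (Fin n)) : Prop :=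
  ∀ i0 ∈ N1, ∃ r : ℕ, 1 ≤ r ∧ ∃ path : ℕ → Fin n, path 0 = i0 ∧ path r ∈ N2 ∧
    ∀ k, 1 ≤ k → k ≤ r → A (path (k - 1)) (path k) ≠ 0

/-- `N⁰(v)`, the set of indices where `v` vanishes. -/
def Nzero {n : ℕ} (v : Fin n → ℝ) : Set (Fin n) := {i | v i = 0}

/-- `N⁺(v)`, the set of indices where `v` is positive. -/
def Npos {n : ℕ} (v : Fin n → ℝ) : Set (Fin n) := {i | 0 < v i}

/-- Diagonal part `A_d` of a matrix. -/
noncomputable def diagPart {n : ℕ} (A : Matrix (Fin n) (Fin n) ℝ) : Matrix (Fin n) (Fin n) ℝ :=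
  Matrix.diagonal fun i => A i i

/-- Positive off-diagonal part `A_a⁺` of a matrix. -/
noncomputable def offDiagPos {n : ℕ} (A : Matrix (Fin n) (Fin n) ℝ) : Matrix (Fin n) (Fin n) ℝ :=
  Matrix.of fun i j => if i ≠ j ∧ 0 < A i j then A i j else 0

/-- Negative off-diagonal part `A_a⁻ = A - A_d - A_a⁺` of a matrix. -/
noncomputable def offDiagNeg {n : ℕ} (A : Matrix (Fin n) (Fin n) ℝ) : Matrix (Fin n) (Fin n) ℝ :=
  (A - diagPart A) - offDiagPos A

section Helpers
variable {n : ℕ}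

lemma mulVec_apply' (C : Matrix (Fin n) (Fin n) ℝ) (u : Fin n → ℝ) (i : Fin n) :
    (C *ᵥ u) i = ∑ j, C i j * u j := rfl

lemma mulVec_nonneg' {C : Matrix (Fin n) (Fin n) ℝ} {u : Fin n → ℝ}
    (hC : ∀ i j, 0 ≤ C i j) (hu : ∀ i, 0 ≤ u i) : ∀ i, 0 ≤ (C *ᵥ u) i := fun i => by
  rw [mulVec_apply']
  exact Finset.sum_nonneg fun j _ => mul_nonneg (hC i j) (hu j)

lemma mul_nonneg' {C D : Matrix (Fin n) (Fin n) ℝ}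
    (hC : ∀ i j, 0 ≤ C i j) (hD : ∀ i j, 0 ≤ D i j) : ∀ i j, 0 ≤ (C * D) i j := fun i j => by
  rw [Matrix.mul_apply]; exact Finset.sum_nonneg fun l _ => mul_nonneg (hC i l) (hD l j)

lemma list_prod_nn_pd (l : List (Matrix (Fin n) (Fin n) ℝ))
    (h : ∀ C ∈ l, (∀ i j, 0 ≤ C i j) ∧ (∀ i, 0 < C i i)) :
    (∀ i j, 0 ≤ l.prod i j) ∧ (∀ i, 0 < l.prod i i) := by
  induction l with
  | nil =>
    simp only [List.prod_nil]
    constructor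
    · intro i j; rw [Matrix.one_apply]; positivity
    · intro i; simp
  | cons C t ih =>
    have hC := h C (by simp)
    have ht := ih (fun D hD => h D (by simp [hD]))
    rw [List.prod_cons]
    refine ⟨mul_nonneg' hC.1 ht.1, fun i => ?_⟩
    rw [Matrix.mul_apply]
    have h1 : C i i * t.prod i i ≤ ∑ l1, C i l1 * t.prod l1 i :=
      Finset.single_le_sum (f := fun l1 => C i l1 * t.prod l1 i)
        (fun j _ => mul_nonneg (hC.1 i j) (ht.1 j i)) (Finset.mem_univ i)
    have h2 := mul_pos (hC.2 i) (ht.2 i)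
    linarith

lemma mulVec_pos_at {C : Matrix (Fin n) (Fin n) ℝ} {u : Fin n → ℝ} {i j : Fin n}
    (hC : ∀ i j, 0 ≤ C i j) (hu : ∀ i, 0 ≤ u i) (h : 0 < C i j * u j) : 0 < (C *ᵥ u) i := by
  have : C i j * u j ≤ ∑ l, C i l * u l :=
    Finset.single_le_sum (f := fun l => C i l * u l)
      (fun l _ => mul_nonneg (hC i l) (hu l)) (Finset.mem_univ j)
  rw [mulVec_apply']
  linarith

lemma mmatrix_diag_pos {Mm : Matrix (Fin n) (Fin n) ℝ} (h : IsNonsingMMatrix Mm) :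
    ∀ i, 0 < Mm i i ∧ 0 < Mm⁻¹ i i := by
  intro i
  have h1 : (Mm⁻¹ * Mm) i i = 1 := by rw [Matrix.nonsing_inv_mul _ h.2.1, Matrix.one_apply_eq]
  rw [Matrix.mul_apply] at h1
  have hsplit : ∑ j, Mm⁻¹ i j * Mm j i
      = Mm⁻¹ i i * Mm i i + ∑ j ∈ Finset.univ.erase i, Mm⁻¹ i j * Mm j i := by
    rw [add_comm, Finset.sum_erase_add _ _ (Finset.mem_univ i)]
  have hrest : ∑ j ∈ Finset.univ.erase i, Mm⁻¹ i j * Mm j i ≤ 0 :=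
    Finset.sum_nonpos fun j hj =>
      mul_nonpos_of_nonneg_of_nonpos (h.2.2 i j) (h.1 j i (Finset.ne_of_mem_erase hj))
  have hprod : 1 ≤ Mm⁻¹ i i * Mm i i := by rw [hsplit] at h1; linarith
  have hinv : 0 ≤ Mm⁻¹ i i := h.2.2 i i
  have hinvpos : 0 < Mm⁻¹ i i := by
    rcases hinv.lt_or_eq with h' | h'
    · exact h'
    · rw [← h', zero_mul] at hprod; linarith
  exact ⟨by nlinarith, hinvpos⟩

end Helpers

section Core
variable {n : ℕ}

/-- Key monotonicity: Z-matrix B with x>0, Bx>0 satisfies: Bc ≥ 0 → c ≥ 0. -/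
lemma zmatrix_mono {B : Matrix (Fin n) (Fin n) ℝ} {x c : Fin n → ℝ}
    (hZ : ∀ i j, i ≠ j → B i j ≤ 0) (hx : ∀ i, 0 < x i) (hBx : ∀ i, 0 < (B *ᵥ x) i)
    (hBc : ∀ i, 0 ≤ (B *ᵥ c) i) : ∀ i, 0 ≤ c i := by
  by_contra hne
  push_neg at hne
  obtain ⟨i1, hi1⟩ := hne
  obtain ⟨i0, -, hmin⟩ := Finset.exists_min_image Finset.univ (fun i => c i / x i)
    ⟨i1, Finset.mem_univ i1⟩
  set m := c i0 / x i0 with hm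
  have hmneg : m < 0 := by
    have := hmin i1 (Finset.mem_univ i1)
    have : c i1 / x i1 < 0 := div_neg_of_neg_of_pos hi1 (hx i1)
    have := hmin i1 (Finset.mem_univ i1)
    linarith
  have hlb : ∀ j, m * x j ≤ c j := fun j => by
    have h1 := hmin j (Finset.mem_univ j)
    calc m * x j ≤ (c j / x j) * x j := by
          exact mul_le_mul_of_nonneg_right h1 (hx j).le
      _ = c j := div_mul_cancel₀ _ (hx j).ne'
  have hceq : c i0 = m * x i0 := by rw [hm, div_mul_cancel₀ _ (hx i0).ne']
  have hterm : ∀ j, B i0 j * c j ≤ B i0 j * (m * x j) := by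
    intro j
    by_cases hij : j = i0
    · subst hij; rw [hceq]
    · exact mul_le_mul_of_nonpos_left (hlb j) (hZ i0 j (Ne.symm hij))
  have hsum : (B *ᵥ c) i0 ≤ m * (B *ᵥ x) i0 := by
    rw [mulVec_apply', mulVec_apply', Finset.mul_sum]
    refine Finset.sum_le_sum fun j _ => ?_
    calc B i0 j * c j ≤ B i0 j * (m * x j) := hterm j
      _ = m * (B i0 j * x j) := by ring
  have : m * (B *ᵥ x) i0 < 0 := mul_neg_of_neg_of_pos hmneg (hBx i0)
  have := hBc i0
  linarith

/-- A Z-matrix with a positive vector mapped to a positive vector is a nonsingular M-matrix. -/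
lemma zmatrix_is_mmatrix {B : Matrix (Fin n) (Fin n) ℝ} {x : Fin n → ℝ}
    (hZ : ∀ i j, i ≠ j → B i j ≤ 0) (hx : ∀ i, 0 < x i) (hBx : ∀ i, 0 < (B *ᵥ x) i) :
    IsNonsingMMatrix B := by
  have hdet : B.det ≠ 0 := by
    intro h0
    obtain ⟨v, hv0, hv⟩ := (Matrix.exists_mulVec_eq_zero_iff).2 h0
    have h1 : ∀ i, 0 ≤ v i := zmatrix_mono hZ hx hBx (fun i => by rw [hv]; exact le_refl 0)
    have h2 : ∀ i, 0 ≤ (-v) i := zmatrix_mono hZ hx hBx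
      (fun i => by rw [Matrix.mulVec_neg, hv]; simp)
    exact hv0 (funext fun i => le_antisymm (by simpa using h2 i) (h1 i))
  have hdetu : IsUnit B.det := isUnit_iff_ne_zero.mpr hdet
  refine ⟨hZ, hdetu, fun i j => ?_⟩
  have hcol : B *ᵥ (fun i => B⁻¹ i j) = fun i => (1 : Matrix (Fin n) (Fin n) ℝ) i j := by
    funext i'
    rw [← Matrix.mul_nonsing_inv _ hdetu, mulVec_apply', Matrix.mul_apply]
  have : ∀ i, 0 ≤ (B *ᵥ fun i => B⁻¹ i j) i := by
    intro i'; rw [hcol]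
    show (0:ℝ) ≤ (1 : Matrix (Fin n) (Fin n) ℝ) i' j
    rw [Matrix.one_apply]; positivity
  exact zmatrix_mono hZ hx hBx this i

/-- helper: a uniform positive lower bound strictly below finitely many positive values -/
lemma exists_pos_lt {T : Finset (Fin n)} (hT : T.Nonempty) (f : Fin n → ℝ)
    (hf : ∀ i ∈ T, 0 < f i) : ∃ δ : ℝ, 0 < δ ∧ ∀ i ∈ T, δ < f i := by
  refine ⟨T.inf' hT f / 2, ?_, fun i hi => ?_⟩
  · have : 0 < T.inf' hT f := (Finset.lt_inf'_iff hT).2 hf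
    linarith
  · have h1 : T.inf' hT f ≤ f i := Finset.inf'_le f hi
    have : 0 < T.inf' hT f := (Finset.lt_inf'_iff hT).2 hf
    linarith

/-- Perturbation: e ≥ 0 with Be > 0 gives x > 0 with Bx > 0. -/
lemma perturb_pos [Nonempty (Fin n)] {B : Matrix (Fin n) (Fin n) ℝ} {e : Fin n → ℝ}
    (he : ∀ i, 0 ≤ e i) (hBe : ∀ i, 0 < (B *ᵥ e) i) :
    ∃ x : Fin n → ℝ, (∀ i, 0 < x i) ∧ ∀ i, 0 < (B *ᵥ x) i := by
  set c := Finset.univ.inf' Finset.univ_nonempty (fun i => (B *ᵥ e) i) with hc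
  have hcpos : 0 < c := (Finset.lt_inf'_iff Finset.univ_nonempty).2 fun i _ => hBe i
  set d := Finset.univ.sup' Finset.univ_nonempty (fun i => |(B *ᵥ (fun _ => (1:ℝ))) i|) with hd
  have hd0 : 0 ≤ d := le_trans (abs_nonneg _) (Finset.le_sup' (fun i => |(B *ᵥ (fun _ => (1:ℝ))) i|) (Finset.mem_univ (Classical.arbitrary (Fin n))))
  set δ := c / (d + 1) with hδ
  have hδpos : 0 < δ := div_pos hcpos (by linarith)
  refine ⟨fun i => e i + δ, fun i => by have := he i; show 0 < e i + δ; linarith, fun i => ?_⟩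
  have hsplit : (B *ᵥ fun j => e j + δ) i = (B *ᵥ e) i + δ * (B *ᵥ (fun _ => (1:ℝ))) i := by
    rw [mulVec_apply', mulVec_apply', mulVec_apply', Finset.mul_sum, ← Finset.sum_add_distrib]
    exact Finset.sum_congr rfl fun j _ => by ring
  have habs : |(B *ᵥ (fun _ => (1:ℝ))) i| ≤ d := by
    rw [hd]; exact Finset.le_sup' (fun i => |(B *ᵥ (fun _ => (1:ℝ))) i|) (Finset.mem_univ i)
  have h1 : -d ≤ (B *ᵥ (fun _ => (1:ℝ))) i := neg_le_of_abs_le habs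
  have h2 : c ≤ (B *ᵥ e) i := by
    rw [hc]; exact Finset.inf'_le (fun i => (B *ᵥ e) i) (Finset.mem_univ i)
  have h3 : δ * d < c := by
    have : δ * (d + 1) = c := div_mul_cancel₀ _ (by linarith)
    nlinarith
  rw [hsplit]
  nlinarith
end Core

section Chains
variable {n : ℕ}

/-- Convert a `Connects` path into a reflexive-transitive chain of off-diagonal nonzero entries. -/
lemma connects_to_rtg {A : Matrix (Fin n) (Fin n) ℝ} {N1 N2 : Set (Fin n)}
    (h : Connects A N1 N2) : ∀ i ∈ N1, ∃ j ∈ N2,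
      Relation.ReflTransGen (fun a b => a ≠ b ∧ A a b ≠ 0) i j := by
  intro i hi
  obtain ⟨r, -, path, h0, hr, hstep⟩ := h i hi
  refine ⟨path r, hr, ?_⟩
  rw [← h0]
  have key : ∀ m, m ≤ r → Relation.ReflTransGen (fun a b => a ≠ b ∧ A a b ≠ 0) (path 0) (path m) := by
    intro m
    induction m with
    | zero => intro _; exact Relation.ReflTransGen.refl
    | succ m ih =>
      intro hm
      have hrtg := ih (le_trans (Nat.le_succ m) hm)
      by_cases heq : path m = path (m + 1)
      · rwa [heq] at hrtg
      · refine hrtg.tail ⟨heq, ?_⟩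
        have := hstep (m + 1) (Nat.le_add_left 1 m) hm
        simpa using this
  exact key r le_rfl

/-- Positivity of inverse entries along chains for nonsingular M-matrices. -/
lemma inv_entry_pos_of_chain {Mm : Matrix (Fin n) (Fin n) ℝ} (h : IsNonsingMMatrix Mm)
    {i j : Fin n} (hc : Relation.ReflTransGen (fun a b => a ≠ b ∧ Mm a b ≠ 0) i j) :
    0 < Mm⁻¹ i j := by
  induction hc using Relation.ReflTransGen.head_induction_on with
  | refl => exact (mmatrix_diag_pos h j).2
  | head hstep htail ih =>
    rename_i a c
    by_cases haj : a = j
    · subst haj; exact (mmatrix_diag_pos h _).2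
    · have hid : (Mm * Mm⁻¹) a j = 0 := by
        rw [Matrix.mul_nonsing_inv _ h.2.1, Matrix.one_apply_ne haj]
      rw [Matrix.mul_apply] at hid
      have hsplit : ∑ l, Mm a l * Mm⁻¹ l j
          = Mm a a * Mm⁻¹ a j + ∑ l ∈ Finset.univ.erase a, Mm a l * Mm⁻¹ l j := by
        rw [add_comm, Finset.sum_erase_add _ _ (Finset.mem_univ a)]
      have hac : Mm a c < 0 := lt_of_le_of_ne (h.1 a c hstep.1) hstep.2
      have hterm : 0 < -(Mm a c) * Mm⁻¹ c j := mul_pos (by linarith) ih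
      have hsum : -(Mm a c) * Mm⁻¹ c j ≤ ∑ l ∈ Finset.univ.erase a, -(Mm a l) * Mm⁻¹ l j :=
        Finset.single_le_sum (f := fun l => -(Mm a l) * Mm⁻¹ l j)
          (fun l hl => mul_nonneg (by have := h.1 a l (Ne.symm (Finset.ne_of_mem_erase hl)); linarith)
            (h.2.2 l j))
          (Finset.mem_erase.2 ⟨Ne.symm hstep.1, Finset.mem_univ c⟩)
      have hneg : ∑ l ∈ Finset.univ.erase a, -(Mm a l) * Mm⁻¹ l j
          = -∑ l ∈ Finset.univ.erase a, Mm a l * Mm⁻¹ l j := by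
        rw [← Finset.sum_neg_distrib]
        exact Finset.sum_congr rfl fun l _ => by ring
      have hdiag : 0 < Mm a a := (mmatrix_diag_pos h a).1
      have hpos : 0 < Mm a a * Mm⁻¹ a j := by
        rw [hsplit] at hid
        rw [hneg] at hsum
        linarith
      nlinarith [h.2.2 a j]

end Chains

section Spread
variable {n : ℕ}

open scoped Classical

lemma rtg_find {B : Matrix (Fin n) (Fin n) ℝ} {w : Fin n → ℝ} (hw : ∀ i, 0 ≤ w i) {i j : Fin n}
    (hrtg : Relation.ReflTransGen (fun a b => a ≠ b ∧ B a b ≠ 0) i j)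
    (hi : w i = 0) (hj : 0 < w j) :
    ∃ l m, w l = 0 ∧ 0 < w m ∧ l ≠ m ∧ B l m ≠ 0 := by
  revert hi
  induction hrtg using Relation.ReflTransGen.head_induction_on with
  | refl => intro hi; rw [hi] at hj; exact absurd hj (lt_irrefl 0)
  | head hstep htail ih =>
    rename_i a c
    intro ha
    by_cases hc : w c = 0
    · exact ih hc
    · exact ⟨a, c, ha, lt_of_le_of_ne (hw c) (Ne.symm hc), hstep.1, hstep.2⟩

lemma spread_aux {B : Matrix (Fin n) (Fin n) ℝ} (hZ : ∀ i j, i ≠ j → B i j ≤ 0) :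
    ∀ (N : ℕ) (x : Fin n → ℝ),
      (Finset.univ.filter fun i => (B *ᵥ x) i = 0).card ≤ N →
      (∀ i, 0 < x i) → (∀ i, 0 ≤ (B *ᵥ x) i) →
      (∀ i, (B *ᵥ x) i = 0 → ∃ j, 0 < (B *ᵥ x) j ∧
        Relation.ReflTransGen (fun a b => a ≠ b ∧ B a b ≠ 0) i j) →
      ∃ y : Fin n → ℝ, (∀ i, 0 < y i) ∧ ∀ i, 0 < (B *ᵥ y) i := by
  intro N
  induction N with
  | zero =>
    intro x hcard hx hBx _
    refine ⟨x, hx, fun i => lt_of_le_of_ne (hBx i) (Ne.symm fun h0 => ?_)⟩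
    have : i ∈ Finset.univ.filter fun i => (B *ᵥ x) i = 0 := by
      simp only [Finset.mem_filter, Finset.mem_univ, true_and]; exact h0
    have := Finset.card_pos.2 ⟨i, this⟩
    omega
  | succ N ih =>
    intro x hcard hx hBx hconn
    by_cases hex : ∃ i, (B *ᵥ x) i = 0
    case neg =>
      push_neg at hex
      exact ⟨x, hx, fun i => lt_of_le_of_ne (hBx i) (Ne.symm (hex i))⟩
    obtain ⟨i0, hi0⟩ := hex
    set w := B *ᵥ x with hwdef
    set T : Finset (Fin n) := Finset.univ.filter (fun i => 0 < w i) with hT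
    have hmemT : ∀ {i}, i ∈ T ↔ 0 < w i := fun {i} => by
      rw [hT]; simp
    obtain ⟨j0, hj0pos, hrtg0⟩ := hconn i0 hi0
    have hTne : T.Nonempty := ⟨j0, hmemT.2 hj0pos⟩
    obtain ⟨l, m, hl0, hmpos, hlm, hBlm⟩ := rtg_find hBx hrtg0 hi0 hj0pos
    have hmT : m ∈ T := hmemT.2 hmpos
    -- choose δ
    set S : Fin n → ℝ := fun i => ∑ j ∈ T, B i j with hS
    set f : Fin n → ℝ := fun i => if 0 < S i then min (x i) (w i / S i) else x i with hf
    have hfpos : ∀ i ∈ T, 0 < f i := by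
      intro i hi
      rw [hf]
      by_cases h' : 0 < S i
      · simp only [h', if_true]
        exact lt_min (hx i) (div_pos (hmemT.1 hi) h')
      · simp only [h', if_false]; exact hx i
    obtain ⟨δ, hδpos, hδlt⟩ := exists_pos_lt hTne f hfpos
    have hδx : ∀ i ∈ T, δ < x i := by
      intro i hi
      have := hδlt i hi
      rw [hf] at this
      by_cases h' : 0 < S i
      · simp only [h', if_true] at this; exact this.trans_le (min_le_left _ _)
      · simpa [h'] using this
    have hδS : ∀ i ∈ T, δ * S i < w i := by
      intro i hi
      by_cases h' : 0 < S i
      · have h1 := hδlt i hi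
        rw [hf] at h1
        simp only [h', if_true] at h1
        have h2 : δ < w i / S i := h1.trans_le (min_le_right _ _)
        exact (lt_div_iff₀ h').1 h2
      · push_neg at h'
        have : δ * S i ≤ 0 := mul_nonpos_of_nonneg_of_nonpos hδpos.le h'
        exact this.trans_lt (hmemT.1 hi)
    set y : Fin n → ℝ := fun i => x i - (if i ∈ T then δ else 0) with hy
    have hypos : ∀ i, 0 < y i := by
      intro i
      rw [hy]
      by_cases hi : i ∈ T
      · simp only [hi, if_true]; have := hδx i hi; linarith
      · simp only [hi, if_false]; simpa using hx i
    have hBy : ∀ i, (B *ᵥ y) i = w i - δ * S i := by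
      intro i
      rw [mulVec_apply', hwdef, mulVec_apply', hS, Finset.mul_sum]
      have h1 : ∀ j ∈ Finset.univ, B i j * y j
          = B i j * x j - (if j ∈ T then δ * B i j else 0) := by
        intro j _
        rw [hy]
        by_cases hj : j ∈ T
        · simp only [hj, if_true]; ring
        · simp only [hj, if_false]; ring
      rw [Finset.sum_congr rfl h1, Finset.sum_sub_distrib]
      congr 1
      rw [Finset.sum_ite_mem, Finset.univ_inter]
    have hSnonposOut : ∀ i, i ∉ T → S i ≤ 0 := by
      intro i hi
      rw [hS]
      refine Finset.sum_nonpos fun j hj => hZ i j fun hij => ?_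
      exact hi (hij ▸ hj)
    have hposT : ∀ i ∈ T, 0 < (B *ᵥ y) i := by
      intro i hi; rw [hBy]; have := hδS i hi; linarith
    have hnonneg : ∀ i, 0 ≤ (B *ᵥ y) i := by
      intro i
      by_cases hi : i ∈ T
      · exact (hposT i hi).le
      · rw [hBy]
        have h1 := hSnonposOut i hi
        have h2 : 0 ≤ w i := hBx i
        nlinarith
    have hzero_sub : ∀ i, (B *ᵥ y) i = 0 → w i = 0 := by
      intro i h0
      by_cases hi : i ∈ T
      · exact absurd h0 (hposT i hi).ne'
      · rw [hBy] at h0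
        have h1 := hSnonposOut i hi
        have h2 : 0 ≤ w i := hBx i
        nlinarith [hδpos]
    -- l drops out of the zero set
    have hlT : l ∉ T := fun h => (hmemT.1 h).ne' hl0
    have hSl : S l < 0 := by
      have hrest : ∑ j ∈ T.erase m, B l j ≤ 0 :=
        Finset.sum_nonpos fun j hj => hZ l j fun hij => hlT (hij ▸ (Finset.mem_of_mem_erase hj))
      have hBlm' : B l m < 0 := lt_of_le_of_ne (hZ l m hlm) hBlm
      have : S l = B l m + ∑ j ∈ T.erase m, B l j := by
        rw [hS, add_comm, Finset.sum_erase_add _ _ hmT]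
      linarith
    have hlpos : 0 < (B *ᵥ y) l := by
      rw [hBy, hl0]
      nlinarith
    -- card decreases
    have hsub : (Finset.univ.filter fun i => (B *ᵥ y) i = 0)
        ⊆ (Finset.univ.filter fun i => w i = 0) := by
      intro i hi
      simp only [Finset.mem_filter, Finset.mem_univ, true_and] at hi ⊢
      exact hzero_sub i hi
    have hssub : (Finset.univ.filter fun i => (B *ᵥ y) i = 0)
        ⊂ (Finset.univ.filter fun i => w i = 0) := by
      refine ⟨hsub, fun hsub' => ?_⟩
      have hlmem : l ∈ Finset.univ.filter fun i => w i = 0 := by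
        simp only [Finset.mem_filter, Finset.mem_univ, true_and]; exact hl0
      have := hsub' hlmem
      simp only [Finset.mem_filter, Finset.mem_univ, true_and] at this
      exact hlpos.ne' this
    have hcard' : (Finset.univ.filter fun i => (B *ᵥ y) i = 0).card ≤ N := by
      have := Finset.card_lt_card hssub
      omega
    refine ih y hcard' hypos hnonneg fun i h0 => ?_
    obtain ⟨j, hjpos, hrtg⟩ := hconn i (hzero_sub i h0)
    exact ⟨j, hposT j (hmemT.2 hjpos), hrtg⟩

end Spread

section ListInv
variable {n : ℕ}

lemma list_inv_prod (l : List (Matrix (Fin n) (Fin n) ℝ)) (h : ∀ C ∈ l, IsUnit C.det) :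
    (l.map Inv.inv).reverse.prod * l.prod = 1 ∧ l.prod * (l.map Inv.inv).reverse.prod = 1 := by
  induction l with
  | nil => simp
  | cons C t ih =>
    have hC := h C (by simp)
    obtain ⟨ih1, ih2⟩ := ih fun D hD => h D (by simp [hD])
    have hrw : ((C :: t).map Inv.inv).reverse.prod = (t.map Inv.inv).reverse.prod * C⁻¹ := by
      rw [List.map_cons, List.reverse_cons, List.prod_append, List.prod_cons, List.prod_nil,
        mul_one]
    rw [hrw, List.prod_cons]
    constructor
    · rw [Matrix.mul_assoc, ← Matrix.mul_assoc C⁻¹, Matrix.nonsing_inv_mul _ hC,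
        Matrix.one_mul, ih1]
    · rw [Matrix.mul_assoc, ← Matrix.mul_assoc t.prod, ih2, Matrix.one_mul,
        Matrix.mul_nonsing_inv _ hC]

end ListInv

theorem product_M_matrix_factorization
    {n k : ℕ} (A L : Matrix (Fin n) (Fin n) ℝ) (M : Fin k → Matrix (Fin n) (Fin n) ℝ)
    (hle : ∀ i j, A i j ≤ ((List.ofFn M).prod * L) i j)
    (hM : ∀ i, IsNonsingMMatrix (M i))
    (hL : ∀ i j, i ≠ j → L i j ≤ 0)
    (e : Fin n → ℝ) (he0 : e ≠ 0) (he : ∀ i, 0 ≤ e i)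
    (hAe : ∀ i, 0 ≤ A.mulVec e i)
    (hconn : (∃ i, Connects (M i) (Nzero (A.mulVec e)) (Npos (A.mulVec e))) ∨
      Connects L (Nzero (A.mulVec e)) (Npos (A.mulVec e))) :
    IsNonsingMMatrix ((List.ofFn fun i => (M i)⁻¹).reverse.prod * A) ∧
      IsUnit A.det ∧ ∀ i j, 0 ≤ A⁻¹ i j := by
  classical
  rcases Nat.eq_zero_or_pos n with hn | hn
  · subst hn; exact absurd (funext fun i => i.elim0) he0
  haveI : Nonempty (Fin n) := ⟨⟨0, hn⟩⟩
  have hlinv : (List.ofFn fun i => (M i)⁻¹) = (List.ofFn M).map Inv.inv := by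
    rw [List.map_ofFn]; rfl
  rw [hlinv]
  set l : List (Matrix (Fin n) (Fin n) ℝ) := List.ofFn M with hl
  set P := l.prod with hP
  set Pinv := (l.map Inv.inv).reverse.prod with hPinvdef
  have hmem : ∀ C ∈ l, ∃ i, M i = C := by
    intro C hC
    rw [hl] at hC
    exact List.mem_ofFn.1 hC
  have hdets : ∀ C ∈ l, IsUnit C.det := fun C hC => by
    obtain ⟨i, rfl⟩ := hmem C hC; exact (hM i).2.1
  obtain ⟨hPinvP, hPPinv⟩ := list_inv_prod l hdets
  have hmeminv : ∀ C ∈ (l.map Inv.inv).reverse, (∀ i j, 0 ≤ C i j) ∧ (∀ i, 0 < C i i) := by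
    intro C hC
    rw [List.mem_reverse, List.mem_map] at hC
    obtain ⟨D, hD, rfl⟩ := hC
    obtain ⟨i, rfl⟩ := hmem D hD
    exact ⟨(hM i).2.2, fun j => (mmatrix_diag_pos (hM i) j).2⟩
  obtain ⟨hPinvNN, hPinvPD⟩ := list_prod_nn_pd _ hmeminv
  set B := Pinv * A with hB
  set v := A.mulVec e with hv
  have hBe : B *ᵥ e = Pinv *ᵥ v := by
    rw [hB, ← Matrix.mulVec_mulVec, hv]
  set w := Pinv *ᵥ v with hw
  have hvNN : ∀ i, 0 ≤ v i := hAe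
  have hwNN : ∀ i, 0 ≤ w i := mulVec_nonneg' hPinvNN hvNN
  have hvw : ∀ i, 0 < v i → 0 < w i := fun i hi => by
    rw [hw]; exact mulVec_pos_at hPinvNN hvNN (mul_pos (hPinvPD i) hi)
  have hwv : ∀ i, w i = 0 → v i = 0 := fun i h0 => by
    by_contra hne
    exact (hvw i (lt_of_le_of_ne (hvNN i) (Ne.symm hne))).ne' h0
  have hBL : ∀ i j, B i j ≤ L i j := by
    intro i j
    have h1 : (Pinv * A) i j ≤ (Pinv * (P * L)) i j := by
      rw [Matrix.mul_apply, Matrix.mul_apply]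
      exact Finset.sum_le_sum fun a _ => mul_le_mul_of_nonneg_left (hle a j) (hPinvNN i a)
    rwa [← Matrix.mul_assoc, hPinvP, Matrix.one_mul, ← hB] at h1
  have hBZ : ∀ i j, i ≠ j → B i j ≤ 0 := fun i j hij => (hBL i j).trans (hL i j hij)
  have hxs : ∃ x : Fin n → ℝ, (∀ i, 0 < x i) ∧ ∀ i, 0 < (B *ᵥ x) i := by
    rcases hconn with ⟨t, hc⟩ | hc
    · -- M-factor connectivity: w is strictly positive
      have hwpos : ∀ i, 0 < w i := by
        intro i
        by_cases hvi : v i = 0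
        · obtain ⟨j, hjN, hrtg⟩ := connects_to_rtg hc i hvi
          have hjpos : 0 < v j := hjN
          have hinv : 0 < (M t)⁻¹ i j := inv_entry_pos_of_chain (hM t) hrtg
          have hmemMt : (M t)⁻¹ ∈ (l.map Inv.inv).reverse := by
            rw [List.mem_reverse, List.mem_map]
            exact ⟨M t, by rw [hl]; exact List.mem_ofFn.2 ⟨t, rfl⟩, rfl⟩
          obtain ⟨s1, s2, hsplit⟩ := List.append_of_mem hmemMt
          have hmem1 : ∀ C ∈ s1, (∀ i j, 0 ≤ C i j) ∧ (∀ i, 0 < C i i) := fun C hC =>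
            hmeminv C (hsplit ▸ List.mem_append_left _ hC)
          have hmem2 : ∀ C ∈ s2, (∀ i j, 0 ≤ C i j) ∧ (∀ i, 0 < C i i) := fun C hC =>
            hmeminv C (hsplit ▸ List.mem_append_right _ (List.mem_cons_of_mem _ hC))
          obtain ⟨h1NN, h1PD⟩ := list_prod_nn_pd s1 hmem1
          obtain ⟨h2NN, h2PD⟩ := list_prod_nn_pd s2 hmem2
          have hwsplit : w = s1.prod *ᵥ ((M t)⁻¹ *ᵥ (s2.prod *ᵥ v)) := by
            rw [hw, hPinvdef, hsplit, List.prod_append, List.prod_cons]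
            simp only [Matrix.mulVec_mulVec, Matrix.mul_assoc]
          have huNN : ∀ i', 0 ≤ (s2.prod *ᵥ v) i' := mulVec_nonneg' h2NN hvNN
          have huj : 0 < (s2.prod *ᵥ v) j := mulVec_pos_at h2NN hvNN (mul_pos (h2PD j) hjpos)
          have hu2 : 0 < ((M t)⁻¹ *ᵥ (s2.prod *ᵥ v)) i :=
            mulVec_pos_at (hM t).2.2 huNN (mul_pos hinv huj)
          have hu2NN : ∀ i', 0 ≤ ((M t)⁻¹ *ᵥ (s2.prod *ᵥ v)) i' :=
            mulVec_nonneg' (hM t).2.2 huNN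
          rw [hwsplit]
          exact mulVec_pos_at h1NN hu2NN (mul_pos (h1PD i) hu2)
        · exact hvw i (lt_of_le_of_ne (hvNN i) (Ne.symm hvi))
      have hBepos : ∀ i, 0 < (B *ᵥ e) i := by
        intro i; rw [hBe]; exact hwpos i
      exact perturb_pos he hBepos
    · -- L connectivity
      have hLB : ∀ a b : Fin n, (a ≠ b ∧ L a b ≠ 0) → (a ≠ b ∧ B a b ≠ 0) := by
        intro a b hab
        have : B a b < 0 := (hBL a b).trans_lt (lt_of_le_of_ne (hL a b hab.1) hab.2)
        exact ⟨hab.1, this.ne⟩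
      have hconnB : ∀ i, w i = 0 → ∃ j, 0 < w j ∧
          Relation.ReflTransGen (fun a b => a ≠ b ∧ B a b ≠ 0) i j := by
        intro i h0
        obtain ⟨j, hjN, hrtg⟩ := connects_to_rtg hc i (hwv i h0)
        exact ⟨j, hvw j hjN, Relation.ReflTransGen.mono hLB _ _ hrtg⟩
      have hezero : ∀ i, e i = 0 → (w i = 0 ∧ ∀ j, j ≠ i → B i j * e j = 0) := by
        intro i h0
        have hterms : ∀ j ∈ Finset.univ, B i j * e j ≤ 0 := by
          intro j _
          by_cases hj : j = i
          · subst hj; rw [h0, mul_zero]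
          · exact mul_nonpos_of_nonpos_of_nonneg (hBZ i j (Ne.symm hj)) (he j)
        have hwBe : w i = (B *ᵥ e) i := by rw [hBe]
        have hsum : (B *ᵥ e) i ≤ 0 := by
          rw [mulVec_apply']; exact Finset.sum_nonpos fun j hj => hterms j hj
        have hBei : (B *ᵥ e) i = 0 := le_antisymm hsum (hwBe ▸ hwNN i)
        have hall := (Finset.sum_eq_zero_iff_of_nonpos hterms).1
          (by rw [← mulVec_apply']; exact hBei)
        exact ⟨by rw [hwBe]; exact hBei, fun j _ => hall j (Finset.mem_univ j)⟩
      have hepos : ∀ i, 0 < e i := by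
        intro i
        rcases (he i).lt_or_eq with h' | h'
        · exact h'
        · exfalso
          obtain ⟨hwi, -⟩ := hezero i h'.symm
          obtain ⟨j, hwj, hrtg⟩ := hconnB i hwi
          have hstay : ∀ a, Relation.ReflTransGen (fun a b => a ≠ b ∧ B a b ≠ 0) a j →
              e a = 0 → e j = 0 := by
            intro a hrtg'
            induction hrtg' using Relation.ReflTransGen.head_induction_on with
            | refl => exact id
            | head hstep htail ih =>
              rename_i a' c
              intro ha'
              have h2 := (hezero a' ha').2 c (Ne.symm hstep.1)
              exact ih ((mul_eq_zero.1 h2).resolve_left hstep.2)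
          have hej : e j = 0 := hstay i hrtg h'.symm
          exact hwj.ne' (hezero j hej).1
      have hBeNN : ∀ i, 0 ≤ (B *ᵥ e) i := by
        intro i; rw [hBe]; exact hwNN i
      have hconn' : ∀ i, (B *ᵥ e) i = 0 → ∃ j, 0 < (B *ᵥ e) j ∧
          Relation.ReflTransGen (fun a b => a ≠ b ∧ B a b ≠ 0) i j := by
        intro i h0
        rw [hBe] at h0
        obtain ⟨j, hj, hrtg⟩ := hconnB i h0
        exact ⟨j, by rw [hBe]; exact hj, hrtg⟩
      exact spread_aux hBZ _ e le_rfl hepos hBeNN hconn'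
  obtain ⟨x, hx, hBx⟩ := hxs
  have hMB : IsNonsingMMatrix B := zmatrix_is_mmatrix hBZ hx hBx
  have hPA : P * B = A := by
    rw [hB, ← Matrix.mul_assoc, hPPinv, Matrix.one_mul]
  have hPunit : IsUnit P := ⟨⟨P, Pinv, hPPinv, hPinvP⟩, rfl⟩
  have hdetA : IsUnit A.det := by
    rw [← hPA, Matrix.det_mul]
    exact ((Matrix.isUnit_iff_isUnit_det P).1 hPunit).mul hMB.2.1
  have hAinv : A⁻¹ = B⁻¹ * Pinv := by
    apply Matrix.inv_eq_left_inv
    rw [Matrix.mul_assoc, ← hB, Matrix.nonsing_inv_mul _ hMB.2.1]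
  refine ⟨hMB, hdetA, fun i j => ?_⟩
  rw [hAinv]
  exact mul_nonneg' (fun a b => hMB.2.2 a b) hPinvNN i j
end

section
/- (Relaxed Lorenz's condition) Let A be an n×n real matrix whose negative off-diagonal part admits a decomposition A_a⁻ = A^z + A^s with A^z ≤ 0 and A^s ≤ 0 entrywise, and suppose there exists a diagonal matrix A_{d*} with A_{d*} ≥ A_d entrywise such that: (1) A_{d*} + A^z is a nonsingular M-matrix (in particular the diagonal entries of A_{d*} are positive, so A_{d*} is invertible); (2) A_a⁺ ≤ A^z A_{d*}⁻¹ A^s entrywise; (3) there exists a nonzero vector e ≥ 0 with Ae ≥ 0 such that A^z or A^s connects N⁰(Ae) with N⁺(Ae). Then A is a product of two nonsingular M-matrices; in particular A is invertible and A⁻¹ ≥ 0 entrywise. -/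
open Matrix

lemma zrow_nonneg {n : ℕ} (M : Matrix (Fin n) (Fin n) ℝ)
    (hZ : ∀ i j, i ≠ j → M i j ≤ 0) (x : Fin n → ℝ)
    (hx : ∀ i, 0 < x i) (hMx : ∀ i, 0 < M.mulVec x i)
    (y : Fin n → ℝ) (hy : ∀ i, 0 ≤ M.mulVec y i) : ∀ i, 0 ≤ y i := by
  by_contra hcon
  push_neg at hcon
  obtain ⟨i0, hi0⟩ := hcon
  obtain ⟨i, -, hi⟩ := Finset.exists_min_image Finset.univ (fun i => y i / x i)
    ⟨i0, Finset.mem_univ i0⟩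
  set m := y i / x i with hm
  have hmneg : m < 0 :=
    lt_of_le_of_lt (hi i0 (Finset.mem_univ i0)) (div_neg_of_neg_of_pos hi0 (hx i0))
  have hylb : ∀ j, m * x j ≤ y j := by
    intro j
    have h1 := hi j (Finset.mem_univ j)
    have h2 : m * x j ≤ (y j / x j) * x j :=
      mul_le_mul_of_nonneg_right h1 (hx j).le
    rwa [div_mul_cancel₀ _ (ne_of_gt (hx j))] at h2
  have hyi : y i = m * x i := (div_mul_cancel₀ _ (ne_of_gt (hx i))).symm
  have key : M.mulVec y i ≤ m * M.mulVec x i := by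
    have h1 : ∀ j ∈ Finset.univ, M i j * y j ≤ M i j * (m * x j) := by
      intro j _
      rcases eq_or_ne j i with rfl | hne
      · rw [← hyi]
      · exact mul_le_mul_of_nonpos_left (hylb j) (hZ i j (Ne.symm hne))
    calc M.mulVec y i = ∑ j, M i j * y j := by simp [Matrix.mulVec, dotProduct]
      _ ≤ ∑ j, M i j * (m * x j) := Finset.sum_le_sum h1
      _ = m * ∑ j, M i j * x j := by rw [Finset.mul_sum]; exact Finset.sum_congr rfl fun j _ => by ring
      _ = m * M.mulVec x i := by simp [Matrix.mulVec, dotProduct]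
  nlinarith [hMx i, hy i]

lemma isNonsingMMatrix_of_pos' {n : ℕ} (M : Matrix (Fin n) (Fin n) ℝ)
    (hZ : ∀ i j, i ≠ j → M i j ≤ 0) (x : Fin n → ℝ)
    (hx : ∀ i, 0 < x i) (hMx : ∀ i, 0 < M.mulVec x i) :
    IsNonsingMMatrix M := by
  have hdet : M.det ≠ 0 := by
    intro h
    obtain ⟨v, hv0, hv⟩ := (Matrix.exists_mulVec_eq_zero_iff).mpr h
    have h1 : ∀ i, 0 ≤ v i := zrow_nonneg M hZ x hx hMx v (by rw [hv]; intro i; simp)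
    have h2 : ∀ i, 0 ≤ -v i := by
      have := zrow_nonneg M hZ x hx hMx (-v) (by rw [Matrix.mulVec_neg, hv]; intro i; simp)
      simpa using this
    refine hv0 (funext fun i => ?_)
    have h1i := h1 i; have h2i := h2 i
    simp only [Pi.zero_apply]
    linarith
  have hu : IsUnit M.det := isUnit_iff_ne_zero.mpr hdet
  refine ⟨hZ, hu, fun i j => ?_⟩
  have hMM : M * M⁻¹ = 1 := Matrix.mul_nonsing_inv M hu
  have hy : ∀ k, 0 ≤ M.mulVec (M⁻¹.mulVec (Pi.single j 1)) k := by
    intro k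
    rw [Matrix.mulVec_mulVec, hMM, Matrix.one_mulVec]
    rcases eq_or_ne k j with rfl | hne
    · simp
    · simp [Pi.single_apply, hne]
  have := zrow_nonneg M hZ x hx hMx _ hy i
  rw [Matrix.mulVec_single] at this
  simpa using this

lemma exists_pos_mulVec_pos {n : ℕ} (M : Matrix (Fin n) (Fin n) ℝ)
    (hZ : ∀ i j, i ≠ j → M i j ≤ 0) (v : Fin n → ℝ)
    (hv : ∀ i, 0 ≤ v i) (hMv : ∀ i, 0 ≤ M.mulVec v i)
    (hc : Connects M (Nzero (M.mulVec v)) (Npos (M.mulVec v))) :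
    ∃ x : Fin n → ℝ, (∀ i, 0 < x i) ∧ ∀ i, 0 < M.mulVec x i := by
  classical
  set w := M.mulVec v with hw
  have hsum : ∀ i, w i = ∑ j, M i j * v j := by
    intro i; simp [hw, Matrix.mulVec, dotProduct]
  -- terms are nonpositive when v i = 0
  have hterm : ∀ i, v i = 0 → ∀ j ∈ Finset.univ, M i j * v j ≤ 0 := by
    intro i hvi j _
    rcases eq_or_ne j i with rfl | hne
    · simp [hvi]
    · exact mul_nonpos_of_nonpos_of_nonneg (hZ i j hne.symm) (hv j)
  have claimA : ∀ i, v i = 0 → w i = 0 := by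
    intro i hvi
    refine le_antisymm ?_ (hMv i)
    rw [hsum i]
    exact Finset.sum_nonpos (hterm i hvi)
  have claimB : ∀ i, v i = 0 → ∀ j, M i j * v j = 0 := by
    intro i hvi j
    have h0 : ∑ j, M i j * v j = 0 := by rw [← hsum i]; exact claimA i hvi
    exact (Finset.sum_eq_zero_iff_of_nonpos (hterm i hvi)).mp h0 j (Finset.mem_univ j)
  -- Step A : v is strictly positive
  have hvpos : ∀ i, 0 < v i := by
    intro i
    rcases (hv i).lt_or_eq with h | h
    · exact h
    · exfalso
      have hwi : w i = 0 := claimA i h.symm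
      obtain ⟨r, hr1, p, hp0, hpr, hpe⟩ := hc i hwi
      have hvz : ∀ k, k ≤ r → v (p k) = 0 := by
        intro k
        induction k with
        | zero => intro _; rw [hp0]; exact h.symm
        | succ k ih =>
          intro hk
          have hvk := ih (by omega)
          have hB := claimB (p k) hvk (p (k + 1))
          have hMne := hpe (k + 1) (by omega) hk
          simp only [Nat.add_sub_cancel] at hMne
          rcases mul_eq_zero.mp hB with h' | h'
          · exact absurd h' hMne
          · exact h'
      have hwr : w (p r) = 0 := claimA (p r) (hvz r le_rfl)
      have : 0 < w (p r) := hpr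
      linarith
  -- Step B : positive diagonal on Nzero w
  have hdiagpos : ∀ i, w i = 0 → 0 < M i i := by
    intro i hwi
    by_contra hle
    push_neg at hle
    have hterm2 : ∀ j ∈ Finset.univ, M i j * v j ≤ 0 := by
      intro j _
      rcases eq_or_ne j i with rfl | hne
      · exact mul_nonpos_of_nonpos_of_nonneg hle (hv j)
      · exact mul_nonpos_of_nonpos_of_nonneg (hZ i j hne.symm) (hv j)
    have hall : ∀ j, M i j = 0 := by
      intro j
      have h0 : ∑ j, M i j * v j = 0 := by rw [← hsum i]; exact hwi
      have := (Finset.sum_eq_zero_iff_of_nonpos hterm2).mp h0 j (Finset.mem_univ j)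
      rcases mul_eq_zero.mp this with h' | h'
      · exact h'
      · exact absurd h' (ne_of_gt (hvpos j))
    obtain ⟨r, hr1, p, hp0, hpr, hpe⟩ := hc i hwi
    have := hpe 1 le_rfl hr1
    simp only [Nat.sub_self, hp0] at this
    exact this (hall (p 1))
  -- Step C : distance function
  have hex : ∀ i, ∃ r : ℕ, ∃ p : ℕ → Fin n, p 0 = i ∧ 0 < w (p r) ∧
      ∀ k, 1 ≤ k → k ≤ r → M (p (k - 1)) (p k) ≠ 0 := by
    intro i
    rcases (hMv i).eq_or_lt with heq | hlt
    · obtain ⟨r, hr1, p, hp0, hpr, hpe⟩ := hc i heq.symm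
      exact ⟨r, p, hp0, hpr, hpe⟩
    · exact ⟨0, fun _ => i, rfl, by simpa using hlt, fun k hk1 hk0 => by omega⟩
  set d : Fin n → ℕ := fun i => Nat.find (hex i) with hd
  have hd0 : ∀ i, d i = 0 → 0 < w i := by
    intro i h0
    obtain ⟨p, hp0, hpr, hpe⟩ := Nat.find_spec (hex i)
    rw [show Nat.find (hex i) = 0 from h0, hp0] at hpr
    exact hpr
  have hdpos : ∀ i, d i ≠ 0 → w i = 0 ∧ ∃ j, j ≠ i ∧ M i j ≠ 0 ∧ d j < d i := by
    intro i hdi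
    have hwi : w i = 0 := by
      rcases (hMv i).eq_or_lt with heq | hlt
      · exact heq.symm
      · exfalso
        have : d i ≤ 0 := Nat.find_le ⟨fun _ => i, rfl, by simpa using hlt,
          fun k hk1 hk0 => by omega⟩
        omega
    obtain ⟨p, hp0, hpr, hpe⟩ : ∃ p : ℕ → Fin n, p 0 = i ∧ 0 < w (p (d i)) ∧
        ∀ k, 1 ≤ k → k ≤ d i → M (p (k - 1)) (p k) ≠ 0 := Nat.find_spec (hex i)
    have hr1 : 1 ≤ d i := Nat.one_le_iff_ne_zero.mpr hdi
    have hshift : d (p 1) ≤ d i - 1 := by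
      refine Nat.find_le ⟨fun k => p (k + 1), rfl, ?_, ?_⟩
      · show 0 < w (p (d i - 1 + 1))
        rw [show d i - 1 + 1 = d i by omega]; exact hpr
      · intro k hk1 hkr
        have h6 := hpe (k + 1) (by omega) (by omega)
        simp only [Nat.add_sub_cancel] at h6
        show M (p (k - 1 + 1)) (p (k + 1)) ≠ 0
        rw [show k - 1 + 1 = k by omega]; exact h6
    have hMne : M i (p 1) ≠ 0 := by
      have := hpe 1 le_rfl hr1
      simpa [hp0] using this
    refine ⟨hwi, p 1, ?_, hMne, by omega⟩
    intro h
    rw [h] at hshift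
    omega
  -- Step D : per-row thresholds
  have hch : ∀ i, ∃ t : ℝ, 0 < t ∧ ∀ ε : ℝ, 0 < ε → ε ≤ 1 → ε < t →
      0 < M.mulVec (fun j => v j - ε ^ (d j + 1) * v j) i := by
    intro i
    have hsplit : ∀ ε : ℝ, M.mulVec (fun j => v j - ε ^ (d j + 1) * v j) i
        = w i - ∑ j, M i j * (ε ^ (d j + 1) * v j) := by
      intro ε
      rw [hsum i]
      simp [Matrix.mulVec, dotProduct, mul_sub, Finset.sum_sub_distrib]
    by_cases hdi : d i = 0
    · refine ⟨w i / (|M i i| * v i + 1), div_pos (hd0 i hdi)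
        (by nlinarith [abs_nonneg (M i i), hvpos i]), ?_⟩
      intro ε hε hε1 hεt
      rw [hsplit]
      have hc0 : ∀ j, 0 ≤ ε ^ (d j + 1) * v j := fun j =>
        mul_nonneg (pow_nonneg hε.le _) (hvpos j).le
      have h1 : ∑ j, M i j * (ε ^ (d j + 1) * v j)
          = M i i * (ε ^ (d i + 1) * v i) + ∑ j ∈ Finset.univ.erase i, M i j * (ε ^ (d j + 1) * v j) := by
        rw [← Finset.add_sum_erase _ _ (Finset.mem_univ i)]
      have h2 : ∑ j ∈ Finset.univ.erase i, M i j * (ε ^ (d j + 1) * v j) ≤ 0 :=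
        Finset.sum_nonpos fun j hj =>
          mul_nonpos_of_nonpos_of_nonneg (hZ i j (Ne.symm (Finset.mem_erase.mp hj).1)) (hc0 j)
      have h3 : M i i * (ε ^ (d i + 1) * v i) ≤ |M i i| * (ε * v i) := by
        rw [hdi, pow_one]
        exact mul_le_mul_of_nonneg_right (le_abs_self _) (mul_nonneg hε.le (hvpos i).le)
      have hd4 : (0:ℝ) < |M i i| * v i + 1 := by nlinarith [abs_nonneg (M i i), hvpos i]
      have h4' : ε * (|M i i| * v i + 1) < w i := (lt_div_iff₀ hd4).mp hεt
      have h4 : |M i i| * (ε * v i) < w i := by nlinarith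
      nlinarith
    · obtain ⟨hwi, j, hji, hMij, hdj⟩ := hdpos i hdi
      have hMijneg : M i j < 0 := lt_of_le_of_ne (hZ i j hji.symm) hMij
      have hMii : 0 < M i i := hdiagpos i hwi
      refine ⟨(-(M i j) * v j) / (M i i * v i), div_pos (by nlinarith [hvpos j]) (by nlinarith [hvpos i]), ?_⟩
      intro ε hε hε1 hεt
      rw [hsplit, hwi]
      have hc0 : ∀ k, 0 ≤ ε ^ (d k + 1) * v k := fun k =>
        mul_nonneg (pow_nonneg hε.le _) (hvpos k).le
      have h1 : ∑ k, M i k * (ε ^ (d k + 1) * v k)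
          = M i i * (ε ^ (d i + 1) * v i) + ∑ k ∈ Finset.univ.erase i, M i k * (ε ^ (d k + 1) * v k) := by
        rw [← Finset.add_sum_erase _ _ (Finset.mem_univ i)]
      have hjmem : j ∈ Finset.univ.erase i := Finset.mem_erase.mpr ⟨hji, Finset.mem_univ j⟩
      have h2 : ∑ k ∈ Finset.univ.erase i, M i k * (ε ^ (d k + 1) * v k)
          = M i j * (ε ^ (d j + 1) * v j) + ∑ k ∈ (Finset.univ.erase i).erase j, M i k * (ε ^ (d k + 1) * v k) := by
        rw [← Finset.add_sum_erase _ _ hjmem]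
      have h3 : ∑ k ∈ (Finset.univ.erase i).erase j, M i k * (ε ^ (d k + 1) * v k) ≤ 0 := by
        refine Finset.sum_nonpos fun k hk => ?_
        have hk' := Finset.mem_erase.mp (Finset.mem_erase.mp hk).2
        exact mul_nonpos_of_nonpos_of_nonneg (hZ i k (Ne.symm hk'.1)) (hc0 k)
      have hpow : ε ^ (d i + 1) ≤ ε * ε ^ (d j + 1) := by
        have h5 : ε ^ (d i) ≤ ε ^ (d j + 1) :=
          pow_le_pow_of_le_one hε.le hε1 (by omega)
        calc ε ^ (d i + 1) = ε ^ (d i) * ε := by ring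
          _ ≤ ε ^ (d j + 1) * ε := mul_le_mul_of_nonneg_right h5 hε.le
          _ = ε * ε ^ (d j + 1) := by ring
      have hεt' : ε * (M i i * v i) < -(M i j) * v j :=
        (lt_div_iff₀ (by nlinarith [hvpos i])).mp hεt
      have hkey : M i i * (ε ^ (d i + 1) * v i) + M i j * (ε ^ (d j + 1) * v j) < 0 := by
        have hp : (0:ℝ) < ε ^ (d j + 1) := by positivity
        nlinarith [mul_le_mul_of_nonneg_left hpow hMii.le, hvpos i, hvpos j,
          mul_lt_mul_of_pos_left hεt' hp]
      nlinarith
  choose t ht1 ht2 using hch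
  -- pick ε
  obtain ⟨ε, hε, hε1, hεt⟩ : ∃ ε : ℝ, 0 < ε ∧ ε < 1 ∧ ∀ i, ε < t i := by
    rcases isEmpty_or_nonempty (Fin n) with hE | hE
    · exact ⟨1/2, by norm_num, by norm_num, fun i => isEmptyElim i⟩
    · obtain ⟨i0⟩ := hE
      set m := Finset.univ.inf' ⟨i0, Finset.mem_univ i0⟩ t with hm
      have hmpos : 0 < m := by
        rw [hm]
        exact (Finset.lt_inf'_iff _).mpr fun i _ => ht1 i
      refine ⟨min (1/2) (m/2), lt_min (by norm_num) (by linarith), ?_, ?_⟩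
      · exact lt_of_le_of_lt (min_le_left _ _) (by norm_num)
      · intro i
        have h1 : min (1/2) (m/2) ≤ m/2 := min_le_right _ _
        have h2 : m ≤ t i := Finset.inf'_le _ (Finset.mem_univ i)
        linarith
  refine ⟨fun j => v j - ε ^ (d j + 1) * v j, ?_, ?_⟩
  · intro j
    have h1 : ε ^ (d j + 1) < 1 := pow_lt_one₀ hε.le hε1 (by omega)
    have h2 := mul_pos (sub_pos.mpr h1) (hvpos j)
    show 0 < v j - ε ^ (d j + 1) * v j
    nlinarith
  · intro i
    exact ht2 i ε hε hε1.le (hεt i)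

theorem relaxed_lorenz_condition
    {n : ℕ} (A Az As Ads : Matrix (Fin n) (Fin n) ℝ)
    (hdecomp : offDiagNeg A = Az + As)
    (hAz : ∀ i j, Az i j ≤ 0) (hAs : ∀ i j, As i j ≤ 0)
    (hdiag : ∀ i j, i ≠ j → Ads i j = 0)
    (hge : ∀ i j, diagPart A i j ≤ Ads i j)
    (h1 : IsNonsingMMatrix (Ads + Az))
    (h2 : ∀ i j, offDiagPos A i j ≤ (Az * Ads⁻¹ * As) i j)
    (e : Fin n → ℝ) (he0 : e ≠ 0) (he : ∀ i, 0 ≤ e i)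
    (hAe : ∀ i, 0 ≤ A.mulVec e i)
    (hconn : Connects Az (Nzero (A.mulVec e)) (Npos (A.mulVec e)) ∨
      Connects As (Nzero (A.mulVec e)) (Npos (A.mulVec e))) :
    (∃ M1 M2 : Matrix (Fin n) (Fin n) ℝ,
      IsNonsingMMatrix M1 ∧ IsNonsingMMatrix M2 ∧ A = M1 * M2) ∧
      IsUnit A.det ∧ ∀ i j, 0 ≤ A⁻¹ i j := by
  classical
  have hoffdiag : ∀ i : Fin n, Az i i = 0 ∧ As i i = 0 := by
    intro i
    have h0 : offDiagNeg A i i = 0 := by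
      simp [offDiagNeg, diagPart, Matrix.sub_apply, offDiagPos]
    rw [hdecomp] at h0
    have h0' : Az i i + As i i = 0 := h0
    constructor <;> [linarith [hAz i i, hAs i i]; linarith [hAz i i, hAs i i]]
  set B := Ads + Az with hB
  obtain ⟨hBZ, hBdet, hBinv⟩ := h1
  have hBmul : B * B⁻¹ = 1 := Matrix.mul_nonsing_inv B hBdet
  have hBmul' : B⁻¹ * B = 1 := Matrix.nonsing_inv_mul B hBdet
  have hBii : ∀ i, 0 < B i i := by
    intro i
    have h1' : (B * B⁻¹) i i = 1 := by rw [hBmul]; simp [Matrix.one_apply]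
    rw [Matrix.mul_apply] at h1'
    have h3' : ∑ k, B i k * B⁻¹ k i
        = B i i * B⁻¹ i i + ∑ k ∈ Finset.univ.erase i, B i k * B⁻¹ k i :=
      (Finset.add_sum_erase _ _ (Finset.mem_univ i)).symm
    have h4' : ∑ k ∈ Finset.univ.erase i, B i k * B⁻¹ k i ≤ 0 :=
      Finset.sum_nonpos fun k hk =>
        mul_nonpos_of_nonpos_of_nonneg (hBZ i k (Ne.symm (Finset.mem_erase.mp hk).1)) (hBinv k i)
    by_contra hle
    push_neg at hle
    have h5' : B i i * B⁻¹ i i ≤ 0 := mul_nonpos_of_nonpos_of_nonneg hle (hBinv i i)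
    rw [h3'] at h1'
    linarith
  have hAdspos : ∀ i, 0 < Ads i i := by
    intro i
    have h5 := hBii i
    have hz := (hoffdiag i).1
    have : B i i = Ads i i + Az i i := rfl
    rw [this, hz] at h5
    simpa using h5
  have hAdsEq : Ads = Matrix.diagonal (fun i => Ads i i) := by
    ext i j
    rcases eq_or_ne i j with rfl | hne
    · simp
    · simp [Matrix.diagonal_apply_ne _ hne, hdiag i j hne]
  have hAdsmul0 : Ads * Matrix.diagonal (fun i => (Ads i i)⁻¹) = 1 := by
    ext i j
    rw [Matrix.mul_diagonal]
    rcases eq_or_ne i j with rfl | hne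
    · rw [Matrix.one_apply_eq]; exact mul_inv_cancel₀ (hAdspos i).ne'
    · rw [Matrix.one_apply_ne hne, hdiag i j hne, zero_mul]
  have hAdsInv : Ads⁻¹ = Matrix.diagonal (fun i => (Ads i i)⁻¹) :=
    Matrix.inv_eq_right_inv hAdsmul0
  have hAdsmul : Ads * Ads⁻¹ = 1 := by rw [hAdsInv]; exact hAdsmul0
  have hAdsmul' : Ads⁻¹ * Ads = 1 := by
    rw [hAdsInv]
    ext i j
    rw [Matrix.diagonal_mul]
    rcases eq_or_ne i j with rfl | hne
    · rw [Matrix.one_apply_eq]; exact inv_mul_cancel₀ (hAdspos i).ne'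
    · rw [Matrix.one_apply_ne hne, hdiag i j hne, mul_zero]
  have hAeq : A = diagPart A + offDiagPos A + Az + As := by
    have h := hdecomp
    rw [show offDiagNeg A = A - diagPart A - offDiagPos A from rfl] at h
    have h' : A - diagPart A - offDiagPos A = Az + As := h
    calc A = (A - diagPart A - offDiagPos A) + diagPart A + offDiagPos A := by abel
      _ = diagPart A + offDiagPos A + Az + As := by rw [h']; abel
  set C := Ads + As with hC
  have hPA : B * Ads⁻¹ * C = Ads + Az + As + Az * Ads⁻¹ * As := by
    rw [hB, hC]
    have expand : (Ads + Az) * Ads⁻¹ * (Ads + As)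
        = Ads * Ads⁻¹ * Ads + Ads * Ads⁻¹ * As + (Az * Ads⁻¹ * Ads + Az * Ads⁻¹ * As) := by
      noncomm_ring
    rw [expand, hAdsmul, Matrix.one_mul, Matrix.one_mul,
      Matrix.mul_assoc Az, hAdsmul', Matrix.mul_one]
    abel
  set R := (Ads - diagPart A) + (Az * Ads⁻¹ * As - offDiagPos A) with hR
  have hRpos : ∀ i j, 0 ≤ R i j := by
    intro i j
    have hg := hge i j
    have hp := h2 i j
    simp only [hR, Matrix.add_apply, Matrix.sub_apply]
    linarith
  have hAPR : A = B * Ads⁻¹ * C - R := by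
    rw [hPA, hR]
    nth_rewrite 1 [hAeq]
    abel
  set M2 := B⁻¹ * A with hM2
  have hM2eq : M2 = Ads⁻¹ * C - B⁻¹ * R := by
    rw [hM2]
    nth_rewrite 1 [hAPR]
    rw [Matrix.mul_sub, ← Matrix.mul_assoc, ← Matrix.mul_assoc, hBmul', Matrix.one_mul]
  have hM2entry : ∀ i j, M2 i j = (Ads i i)⁻¹ * C i j - (B⁻¹ * R) i j := by
    intro i j
    rw [hM2eq]
    rw [Matrix.sub_apply, hAdsInv, Matrix.diagonal_mul]
  have hBRnn : ∀ i j, 0 ≤ (B⁻¹ * R) i j := by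
    intro i j
    rw [Matrix.mul_apply]
    exact Finset.sum_nonneg fun k _ => mul_nonneg (hBinv i k) (hRpos k j)
  have hM2Z : ∀ i j, i ≠ j → M2 i j ≤ 0 := by
    intro i j hne
    rw [hM2entry]
    have hC0 : C i j = As i j := by
      simp [hC, Matrix.add_apply, hdiag i j hne]
    rw [hC0]
    have h5 := hBRnn i j
    have h6 : (Ads i i)⁻¹ * As i j ≤ 0 :=
      mul_nonpos_of_nonneg_of_nonpos (inv_nonneg.mpr (hAdspos i).le) (hAs i j)
    linarith
  have hM2As : ∀ a b, As a b ≠ 0 → M2 a b ≠ 0 := by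
    intro a b hne0
    have hab : a ≠ b := by rintro rfl; exact hne0 (hoffdiag a).2
    have hAsneg : As a b < 0 := lt_of_le_of_ne (hAs a b) hne0
    have hlt : M2 a b < 0 := by
      rw [hM2entry]
      have hC0 : C a b = As a b := by simp [hC, Matrix.add_apply, hdiag a b hab]
      rw [hC0]
      have h5 := hBRnn a b
      have h6 : (Ads a a)⁻¹ * As a b < 0 :=
        mul_neg_of_pos_of_neg (inv_pos.mpr (hAdspos a)) hAsneg
      linarith
    exact hlt.ne
  have hBrec : B⁻¹ = Ads⁻¹ + B⁻¹ * (-Az) * Ads⁻¹ := by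
    have h5 : B⁻¹ * Ads + B⁻¹ * Az = 1 := by rw [← Matrix.mul_add]; exact hBmul'
    have h6 : B⁻¹ * Ads = 1 - B⁻¹ * Az := by rw [← h5]; abel
    calc B⁻¹ = B⁻¹ * Ads * Ads⁻¹ := by rw [Matrix.mul_assoc, hAdsmul, Matrix.mul_one]
      _ = (1 - B⁻¹ * Az) * Ads⁻¹ := by rw [h6]
      _ = Ads⁻¹ + B⁻¹ * (-Az) * Ads⁻¹ := by
          rw [Matrix.sub_mul, Matrix.one_mul, Matrix.mul_neg, Matrix.neg_mul]
          abel
  have hnAznn : ∀ i j, 0 ≤ (B⁻¹ * (-Az)) i j := by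
    intro i j
    rw [Matrix.mul_apply]
    refine Finset.sum_nonneg fun k _ => mul_nonneg (hBinv i k) ?_
    simpa using neg_nonneg.mpr (hAz k j)
  have hBge : ∀ i j, B⁻¹ i j = Ads⁻¹ i j + (B⁻¹ * (-Az)) i j * (Ads j j)⁻¹ := by
    intro i j
    nth_rewrite 1 [hBrec]
    rw [Matrix.add_apply]
    congr 1
    rw [show B⁻¹ * (-Az) * Ads⁻¹ = (B⁻¹ * (-Az)) * Matrix.diagonal (fun i => (Ads i i)⁻¹) from by
      rw [hAdsInv]]
    rw [Matrix.mul_diagonal]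
  have hAdsInvnn : ∀ i j, 0 ≤ Ads⁻¹ i j := by
    intro i j
    rw [hAdsInv]
    rcases eq_or_ne i j with rfl | hne
    · simp only [Matrix.diagonal_apply_eq]
      exact inv_nonneg.mpr (hAdspos i).le
    · simp [Matrix.diagonal_apply_ne _ hne]
  have hBdiagpos : ∀ i, 0 < B⁻¹ i i := by
    intro i
    rw [hBge]
    have h5 : Ads⁻¹ i i = (Ads i i)⁻¹ := by rw [hAdsInv, Matrix.diagonal_apply_eq]
    have h6 : 0 ≤ (B⁻¹ * (-Az)) i i * (Ads i i)⁻¹ :=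
      mul_nonneg (hnAznn i i) (inv_nonneg.mpr (hAdspos i).le)
    rw [h5]
    have := inv_pos.mpr (hAdspos i)
    linarith
  have hBpath : ∀ (r : ℕ) (p : ℕ → Fin n),
      (∀ k, 1 ≤ k → k ≤ r → Az (p (k - 1)) (p k) ≠ 0) → 0 < B⁻¹ (p 0) (p r) := by
    intro r
    induction r with
    | zero => intro p _; exact hBdiagpos (p 0)
    | succ r ih =>
      intro p hpe
      have hprev : 0 < B⁻¹ (p 0) (p r) := ih p fun k hk1 hkr => hpe k hk1 (by omega)
      have hAzne : Az (p r) (p (r + 1)) ≠ 0 := by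
        have := hpe (r + 1) (by omega) le_rfl
        simpa using this
      have hAzpos : 0 < -Az (p r) (p (r + 1)) := by
        have := hAz (p r) (p (r + 1))
        have hlt : Az (p r) (p (r + 1)) < 0 := lt_of_le_of_ne this hAzne
        linarith
      rw [hBge]
      have hterm : B⁻¹ (p 0) (p r) * (-Az (p r) (p (r + 1)))
          ≤ (B⁻¹ * (-Az)) (p 0) (p (r + 1)) := by
        rw [Matrix.mul_apply]
        have := Finset.single_le_sum
          (f := fun k => B⁻¹ (p 0) k * (-Az) k (p (r + 1)))
          (fun k _ => mul_nonneg (hBinv _ _) (by simpa using neg_nonneg.mpr (hAz k (p (r + 1)))))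
          (Finset.mem_univ (p r))
        simpa using this
      have h7 := hAdsInvnn (p 0) (p (r + 1))
      have h8 := inv_pos.mpr (hAdspos (p (r + 1)))
      nlinarith [mul_pos hprev hAzpos]
  set u := A.mulVec e with hu
  have hwdef : M2.mulVec e = B⁻¹.mulVec u := by
    rw [hM2, hu, ← Matrix.mulVec_mulVec]
  have hwentry : ∀ i, M2.mulVec e i = ∑ k, B⁻¹ i k * u k := by
    intro i
    rw [hwdef]
    simp [Matrix.mulVec, dotProduct]
  have hw0 : ∀ i, 0 ≤ M2.mulVec e i := by
    intro i
    rw [hwentry]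
    exact Finset.sum_nonneg fun k _ => mul_nonneg (hBinv i k) (hAe k)
  have hposmap : ∀ i, 0 < u i → 0 < M2.mulVec e i := by
    intro i hui
    rw [hwentry]
    have h5 : B⁻¹ i i * u i ≤ ∑ k, B⁻¹ i k * u k :=
      Finset.single_le_sum (fun k _ => mul_nonneg (hBinv i k) (hAe k)) (Finset.mem_univ i)
    nlinarith [mul_pos (hBdiagpos i) hui]
  have hzeromap : ∀ i, M2.mulVec e i = 0 → u i = 0 := by
    intro i hwi
    by_contra hne
    have hui : 0 < u i := lt_of_le_of_ne (hAe i) (Ne.symm hne)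
    exact (hposmap i hui).ne' hwi
  have hConn : Connects M2 (Nzero (M2.mulVec e)) (Npos (M2.mulVec e)) := by
    intro i0 hi0
    have hwi0 : M2.mulVec e i0 = 0 := hi0
    have hui0 : u i0 = 0 := hzeromap i0 hwi0
    rcases hconn with hcz | hcs
    · exfalso
      obtain ⟨r, hr1, p, hp0, hpr, hpe⟩ := hcz i0 hui0
      have hBp : 0 < B⁻¹ i0 (p r) := by
        have := hBpath r p hpe
        rwa [hp0] at this
      have hupr : 0 < u (p r) := hpr
      have h5 : B⁻¹ i0 (p r) * u (p r) ≤ M2.mulVec e i0 := by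
        rw [hwentry]
        exact Finset.single_le_sum
          (fun k _ => mul_nonneg (hBinv i0 k) (hAe k)) (Finset.mem_univ (p r))
      nlinarith [mul_pos hBp hupr]
    · obtain ⟨r, hr1, p, hp0, hpr, hpe⟩ := hcs i0 hui0
      exact ⟨r, hr1, p, hp0, hposmap _ hpr, fun k hk1 hkr => hM2As _ _ (hpe k hk1 hkr)⟩
  obtain ⟨x, hx, hMx⟩ := exists_pos_mulVec_pos M2 hM2Z e he hw0 hConn
  have hM2nonsing : IsNonsingMMatrix M2 := isNonsingMMatrix_of_pos' M2 hM2Z x hx hMx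
  have hABM2 : A = B * M2 := by
    rw [hM2, ← Matrix.mul_assoc, hBmul, Matrix.one_mul]
  have hdetA : IsUnit A.det := by
    rw [hABM2, Matrix.det_mul]
    exact hBdet.mul hM2nonsing.2.1
  refine ⟨⟨B, M2, ⟨hBZ, hBdet, hBinv⟩, hM2nonsing, hABM2⟩, hdetA, ?_⟩
  intro i j
  rw [hABM2, Matrix.mul_inv_rev, Matrix.mul_apply]
  exact Finset.sum_nonneg fun k _ => mul_nonneg (hM2nonsing.2.2 i k) (hBinv k j)
end

section
/- (Discrete maximum principle from monotonicity) Let L be an N×N real matrix, B an N×N∂ real matrix, and let T be the (N+N∂)×(N+N∂) block matrix T = [[L, B],[0, I]] where I is the N∂×N∂ identity. Suppose T is invertible, T⁻¹ ≥ 0 entrywise, and every row sum of T is nonnegative. Then for all u ∈ ℝ^N and u∂ ∈ ℝ^{N∂}: if (Lu + Bu∂)_i ≤ 0 for all i = 1,…,N, then max_{1≤i≤N} u_i ≤ max{0, max_{1≤j≤N∂} u∂_j}. -/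
open Matrix

theorem discrete_maximum_principle_from_monotonicity
    {N Nb : ℕ} (hN : 0 < N) (hNb : 0 < Nb)
    (L : Matrix (Fin N) (Fin N) ℝ) (B : Matrix (Fin N) (Fin Nb) ℝ)
    (T : Matrix (Fin N ⊕ Fin Nb) (Fin N ⊕ Fin Nb) ℝ)
    (hT : T = Matrix.fromBlocks L B 0 1)
    (hinv : IsUnit T.det)
    (hpos : ∀ i j, 0 ≤ T⁻¹ i j)
    (hrow : ∀ i, 0 ≤ ∑ j, T i j)
    (u : Fin N → ℝ) (ub : Fin Nb → ℝ)
    (h : ∀ i, (L.mulVec u + B.mulVec ub) i ≤ 0) :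
    (Finset.univ.sup' ⟨⟨0, hN⟩, Finset.mem_univ _⟩ u)
      ≤ max 0 (Finset.univ.sup' ⟨⟨0, hNb⟩, Finset.mem_univ _⟩ ub) := by
  set M := max 0 (Finset.univ.sup' ⟨⟨0, hNb⟩, Finset.mem_univ _⟩ ub) with hM
  have hM0 : 0 ≤ M := le_max_left _ _
  have hMub : ∀ j, ub j ≤ M := fun j =>
    le_trans (Finset.le_sup' ub (Finset.mem_univ j)) (le_max_right _ _)
  set w : Fin N ⊕ Fin Nb → ℝ := fun k => M - Sum.elim u ub k with hw
  have hTv : T.mulVec (Sum.elim u ub) = Sum.elim (L.mulVec u + B.mulVec ub) ub := by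
    rw [hT, Matrix.fromBlocks_mulVec]
    simp [Matrix.one_mulVec]
  have hr1 : ∀ j : Fin Nb, (∑ k, T (Sum.inr j) k) = 1 := by
    intro j
    rw [hT]
    simp [Fintype.sum_sum_type, Matrix.one_apply]
  have hTw : ∀ k, 0 ≤ T.mulVec w k := by
    intro k
    have hsplit : T.mulVec w k = M * (∑ j, T k j) - T.mulVec (Sum.elim u ub) k := by
      simp only [Matrix.mulVec, dotProduct, hw, mul_sub, Finset.sum_sub_distrib]
      congr 1
      rw [Finset.mul_sum]
      exact Finset.sum_congr rfl fun x _ => mul_comm _ _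
    rw [hsplit, hTv]
    cases k with
    | inl i =>
        have h1 := h i
        have h2 := hrow (Sum.inl i)
        simp only [Sum.elim_inl]
        nlinarith
    | inr j =>
        have h1 := hMub j
        simp only [Sum.elim_inr, hr1 j]
        linarith
  have hw0 : ∀ k, 0 ≤ w k := by
    intro k
    have hwe : w = T⁻¹.mulVec (T.mulVec w) := by
      rw [Matrix.mulVec_mulVec, Matrix.nonsing_inv_mul T hinv, Matrix.one_mulVec]
    rw [hwe]
    show 0 ≤ ∑ j, T⁻¹ k j * (T.mulVec w) j
    exact Finset.sum_nonneg fun j _ => mul_nonneg (hpos k j) (hTw j)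
  apply Finset.sup'_le
  intro i _
  have := hw0 (Sum.inl i)
  simp only [hw, Sum.elim_inl] at this
  linarith
end

section
/- Let A be an n×n real matrix with positive diagonal entries and nonpositive off-diagonal entries. If all row sums of A are nonnegative (A𝟙 ≥ 0, where 𝟙 is the all-ones vector) and A connects N⁰(A𝟙) with N⁺(A𝟙), then A is a nonsingular M-matrix, i.e., A is invertible and A⁻¹ ≥ 0 entrywise. -/
open Matrix

lemma key_lemma {n : ℕ} (A : Matrix (Fin n) (Fin n) ℝ)
    (hoff : ∀ i j, i ≠ j → A i j ≤ 0)
    (hrow : ∀ i, 0 ≤ A.mulVec (fun _ => 1) i)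
    (hconn : Connects A (Nzero (A.mulVec fun _ => 1)) (Npos (A.mulVec fun _ => 1)))
    (v : Fin n → ℝ) (hv : ∀ i, 0 ≤ A.mulVec v i) : ∀ i, 0 ≤ v i := by
  by_contra hcon
  push_neg at hcon
  obtain ⟨i1, hi1⟩ := hcon
  obtain ⟨i0, -, hmin⟩ := Finset.exists_min_image Finset.univ v ⟨i1, Finset.mem_univ i1⟩
  have hmin' : ∀ j, v i0 ≤ v j := fun j => hmin j (Finset.mem_univ j)
  set m := -v i0 with hmdef
  have hmpos : 0 < m := by
    have := hmin' i1; rw [hmdef]; linarith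
  have hrow1 : ∀ i, A.mulVec (fun _ => 1) i = ∑ j, A i j := by
    intro i; simp [Matrix.mulVec, dotProduct]
  have hclaim : ∀ i, v i = -m →
      A.mulVec (fun _ => 1) i = 0 ∧ ∀ j, A i j ≠ 0 → v j = -m := by
    intro i hvi
    have hterm : ∀ j, A i j * (v j + m) ≤ 0 := by
      intro j
      by_cases hji : j = i
      · subst hji; rw [hvi]; ring_nf; simp
      · have h1 : A i j ≤ 0 := hoff i j (Ne.symm hji)
        have h2 : 0 ≤ v j + m := by have := hmin' j; rw [hmdef] at *; linarith
        exact mul_nonpos_of_nonpos_of_nonneg h1 h2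
    have hsplit : A.mulVec v i = (∑ j, A i j * (v j + m)) - m * (∑ j, A i j) := by
      have h := Finset.sum_mul Finset.univ (fun j => A i j) m
      simp only [mul_add, Finset.sum_add_distrib, Matrix.mulVec, dotProduct, ← h]
      ring
    have hsum_le : (∑ j, A i j * (v j + m)) ≤ 0 :=
      Finset.sum_nonpos fun j _ => hterm j
    have hms : 0 ≤ m * (∑ j, A i j) := by
      have := hrow i; rw [hrow1 i] at this; positivity
    have hAv := hv i
    rw [hsplit] at hAv
    have hsum0 : (∑ j, A i j * (v j + m)) = 0 := le_antisymm hsum_le (by linarith)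
    have hms0 : m * (∑ j, A i j) = 0 := le_antisymm (by linarith) hms
    constructor
    · rw [hrow1 i]
      rcases mul_eq_zero.mp hms0 with h | h
      · exact absurd h (ne_of_gt hmpos)
      · exact h
    · intro j hAij
      by_cases hji : j = i
      · subst hji; exact hvi
      · have := (Finset.sum_eq_zero_iff_of_nonpos fun j _ => hterm j).mp hsum0 j
          (Finset.mem_univ j)
        rcases mul_eq_zero.mp this with h | h
        · exact absurd h hAij
        · linarith
  have hvi0 : v i0 = -m := by rw [hmdef, neg_neg]
  obtain ⟨r, hr1, path, hp0, hpr, hpstep⟩ := hconn i0 ((hclaim i0 hvi0).1)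
  have hall : ∀ k, k ≤ r → v (path k) = -m := by
    intro k
    induction k with
    | zero => intro _; rw [hp0]; exact hvi0
    | succ k ih =>
      intro hk
      have hk' : k ≤ r := Nat.le_of_succ_le hk
      have hne : A (path k) (path (k + 1)) ≠ 0 := by
        have := hpstep (k + 1) (Nat.le_add_left 1 k) hk
        simpa using this
      exact (hclaim (path k) (ih hk')).2 (path (k + 1)) hne
  have h1 := (hclaim (path r) (hall r le_rfl)).1
  have h2 : 0 < A.mulVec (fun _ => 1) (path r) := hpr
  linarith

theorem row_sum_M_matrix_criterion
    {n : ℕ} (A : Matrix (Fin n) (Fin n) ℝ)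
    (hdiag : ∀ i, 0 < A i i)
    (hoff : ∀ i j, i ≠ j → A i j ≤ 0)
    (hrow : ∀ i, 0 ≤ A.mulVec (fun _ => 1) i)
    (hconn : Connects A (Nzero (A.mulVec fun _ => 1)) (Npos (A.mulVec fun _ => 1))) :
    IsUnit A.det ∧ ∀ i j, 0 ≤ A⁻¹ i j := by
  have key := key_lemma A hoff hrow hconn
  have hker : ∀ v, A.mulVec v = 0 → v = 0 := by
    intro v hv0
    have h1 := key v (fun i => by rw [hv0]; exact le_refl 0)
    have h2 := key (-v) (fun i => by rw [Matrix.mulVec_neg, hv0]; simp)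
    funext i
    have := h1 i
    have h2i := h2 i
    simp only [Pi.neg_apply] at h2i
    have : v i = 0 := le_antisymm (by linarith) this
    simpa using this
  have hdet : IsUnit A.det := by
    rw [isUnit_iff_ne_zero]
    intro hdet0
    obtain ⟨v, hvne, hv0⟩ := Matrix.exists_mulVec_eq_zero_iff.mpr hdet0
    exact hvne (hker v hv0)
  refine ⟨hdet, fun i j => ?_⟩
  have hAAinv : A * A⁻¹ = 1 := Matrix.mul_nonsing_inv A hdet
  have hcol : ∀ k, A.mulVec (fun l => A⁻¹ l j) k = (1 : Matrix (Fin n) (Fin n) ℝ) k j := by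
    intro k
    rw [← hAAinv, Matrix.mul_apply]
    simp [Matrix.mulVec, dotProduct]
  exact key (fun l => A⁻¹ l j) (fun k => by
    rw [hcol k, Matrix.one_apply]
    split_ifs <;> norm_num) i
end

section
/- Let A be an n×n real matrix with positive diagonal entries and nonpositive off-diagonal entries. Then A is a nonsingular M-matrix (i.e., A is invertible with A⁻¹ ≥ 0 entrywise) if and only if there exists a diagonal matrix D with positive diagonal entries such that every row sum of AD is positive. -/
open Matrix

lemma key_nonneg {n : ℕ} (A : Matrix (Fin n) (Fin n) ℝ)
    (hoff : ∀ i j, i ≠ j → A i j ≤ 0)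
    (d : Fin n → ℝ) (hd : ∀ i, 0 < d i) (hAd : ∀ i, 0 < A.mulVec d i)
    (x : Fin n → ℝ) (hx : ∀ i, 0 ≤ A.mulVec x i) : ∀ i, 0 ≤ x i := by
  by_contra hcon
  push_neg at hcon
  obtain ⟨i1, hi1⟩ := hcon
  obtain ⟨i0, -, hi0⟩ := Finset.exists_min_image Finset.univ (fun i => x i / d i)
    ⟨i1, Finset.mem_univ i1⟩
  set t := x i0 / d i0 with ht
  have htneg : t < 0 := by
    have h1 : x i1 / d i1 < 0 := div_neg_of_neg_of_pos hi1 (hd i1)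
    exact lt_of_le_of_lt (hi0 i1 (Finset.mem_univ i1)) h1
  have hxt : ∀ j, t * d j ≤ x j := by
    intro j
    have h := hi0 j (Finset.mem_univ j)
    exact (le_div_iff₀ (hd j)).mp h
  have hxi0 : x i0 = t * d i0 := by
    rw [ht, div_mul_cancel₀ _ (hd i0).ne']
  have hsum : A.mulVec x i0 ≤ t * A.mulVec d i0 := by
    have : ∀ j, A i0 j * x j ≤ t * (A i0 j * d j) := by
      intro j
      by_cases hj : j = i0
      · subst hj; rw [hxi0]; ring_nf; exact le_refl _
      · have h1 : A i0 j ≤ 0 := hoff i0 j (fun h => hj h.symm)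
        have := mul_le_mul_of_nonpos_left (hxt j) h1
        linarith [this]
    calc A.mulVec x i0 = ∑ j, A i0 j * x j := rfl
      _ ≤ ∑ j, t * (A i0 j * d j) := Finset.sum_le_sum (fun j _ => this j)
      _ = t * ∑ j, A i0 j * d j := by rw [Finset.mul_sum]
      _ = t * A.mulVec d i0 := rfl
  have : A.mulVec x i0 < 0 :=
    lt_of_le_of_lt hsum (mul_neg_of_neg_of_pos htneg (hAd i0))
  exact absurd (hx i0) (not_le.mpr this)

theorem M_matrix_iff_scaled_positive_row_sums
    {n : ℕ} (A : Matrix (Fin n) (Fin n) ℝ)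
    (hdiag : ∀ i, 0 < A i i)
    (hoff : ∀ i j, i ≠ j → A i j ≤ 0) :
    (IsUnit A.det ∧ ∀ i j, 0 ≤ A⁻¹ i j) ↔
      ∃ d : Fin n → ℝ, (∀ i, 0 < d i) ∧ ∀ i, 0 < ∑ j, (A * Matrix.diagonal d) i j := by
  constructor
  · rintro ⟨hu, hinv⟩
    refine ⟨fun j => ∑ k, A⁻¹ j k, ?_, ?_⟩
    · intro j
      have hge : 0 ≤ ∑ k, A⁻¹ j k := Finset.sum_nonneg (fun k _ => hinv j k)
      rcases hge.lt_or_eq with h | h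
      · exact h
      · exfalso
        have hzero : ∀ k ∈ Finset.univ, A⁻¹ j k = 0 := by
          intro k _
          exact (Finset.sum_eq_zero_iff_of_nonneg (fun k _ => hinv j k)).mp h.symm k
            (Finset.mem_univ k)
        have h1 : (A⁻¹ * A) j j = 0 := by
          simp only [Matrix.mul_apply]
          exact Finset.sum_eq_zero (fun k hk => by rw [hzero k hk, zero_mul])
        rw [Matrix.nonsing_inv_mul A hu] at h1
        simp at h1
    · intro i
      have : ∑ j, (A * Matrix.diagonal fun j => ∑ k, A⁻¹ j k) i j = 1 := by
        simp only [Matrix.mul_diagonal]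
        have : ∑ j, A i j * ∑ k, A⁻¹ j k = ∑ k, (A * A⁻¹) i k := by
          simp only [Matrix.mul_apply, Finset.mul_sum]
          rw [Finset.sum_comm]
        rw [this, Matrix.mul_nonsing_inv A hu]
        simp [Matrix.one_apply]
      rw [this]; exact one_pos
  · rintro ⟨d, hd, hrow⟩
    have hAd : ∀ i, 0 < A.mulVec d i := by
      intro i
      have := hrow i
      simpa [Matrix.mulVec, dotProduct, Matrix.mul_diagonal] using this
    have hdet : IsUnit A.det := by
      by_contra h
      have hdet0 : A.det = 0 := by
        simpa [isUnit_iff_ne_zero] using h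
      obtain ⟨v, hv, hAv⟩ := (Matrix.exists_mulVec_eq_zero_iff).mpr hdet0
      have h1 : ∀ i, 0 ≤ v i :=
        key_nonneg A hoff d hd hAd v (fun i => by rw [hAv]; exact le_refl 0)
      have h2 : ∀ i, 0 ≤ (-v) i := by
        apply key_nonneg A hoff d hd hAd
        intro i
        rw [Matrix.mulVec_neg, hAv]
        simp
      apply hv
      funext i
      have := h1 i
      have := h2 i
      simp only [Pi.neg_apply, Pi.zero_apply] at *
      linarith
    refine ⟨hdet, ?_⟩
    intro i j
    have hcol : A.mulVec (fun k => A⁻¹ k j) = fun i => (1 : Matrix (Fin n) (Fin n) ℝ) i j := by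
      funext i
      simp only [Matrix.mulVec, dotProduct]
      have : ∑ k, A i k * A⁻¹ k j = (A * A⁻¹) i j := rfl
      rw [this, Matrix.mul_nonsing_inv A hdet]
    have : ∀ k, 0 ≤ A⁻¹ k j := by
      apply key_nonneg A hoff d hd hAd
      intro k
      rw [hcol]
      by_cases h : k = j <;> simp [Matrix.one_apply, h]
    exact this i
end

section
/- Let n be an odd positive integer, K = (n+1)/2, and let p₁,…,p_K > 0 and q₁,…,q_K > 0 be the cell half-widths of a quasi-uniform rectangular Q² mesh, with L̄_h the associated Q² spectral element matrix for the Laplacian with Dirichlet boundary conditions, satisfying the mesh constraints: for all k, m ∈ {1,…,K−1}, writing h_{a−1} = p_k, h_a = p_{k+1}, h_{b−1} = q_m, h_b = q_{m+1}, one has h_a h_{a−1} ≥ (7/12)·max{h_b², h_{b−1}²}, h_b h_{b−1} ≥ (7/12)·max{h_a², h_{a−1}²}, min{h_a, h_{a−1}} ≥ (1/√3)·max{h_b, h_{b−1}}, and min{h_b, h_{b−1}} ≥ (1/√3)·max{h_a, h_{a−1}}. Then the scheme satisfies the discrete maximum principle: for any u ∈ ℝ^{(n+2)×(n+2)}, if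 (L̄_h u)_{ij} ≤ 0 for all interior points (i,j), then max over interior points of u_{ij} is at most max{0, max over boundary points of u_{ij}}. -/
open Matrix

/-- `h_a` at an interior index `i`: if `i` is odd it is `p ((i+1)/2)`,
if `i` is even it is `p (i/2 + 1)`. -/
def meshHa (p : ℕ → ℝ) (i : ℕ) : ℝ :=
  if i % 2 = 1 then p ((i + 1) / 2) else p (i / 2 + 1)

/-- `h_{a-1}` at an interior index `i`: if `i` is odd it is `p ((i+1)/2)`,
if `i` is even it is `p (i/2)`. -/
def meshHa1 (p : ℕ → ℝ) (i : ℕ) : ℝ :=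
  if i % 2 = 1 then p ((i + 1) / 2) else p (i / 2)

/-- The `Q²` spectral element operator for the Laplacian with Dirichlet boundary
conditions on the quasi-uniform rectangular mesh with cell half-widths
`p` in the `x`-direction and `q` in the `y`-direction, applied to `u` at grid point `(i,j)`. -/
noncomputable def LhOp (n : ℕ) (p q : ℕ → ℝ) (u : ℕ → ℕ → ℝ) (i j : ℕ) : ℝ :=
  if i = 0 ∨ i = n + 1 ∨ j = 0 ∨ j = n + 1 then u i j
  else
    let ha := meshHa p i
    let ha1 := meshHa1 p i
    let hb := meshHa q j
    let hb1 := meshHa1 q j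
    if i % 2 = 1 then
      if j % 2 = 1 then
        -- cell center
        (2 * ha ^ 2 + 2 * hb ^ 2) / (ha ^ 2 * hb ^ 2) * u i j
          - u (i + 1) j / ha ^ 2 - u (i - 1) j / ha ^ 2
          - u i (j + 1) / hb ^ 2 - u i (j - 1) / hb ^ 2
      else
        -- edge center, edge parallel to the x-axis
        (7 * ha ^ 2 + 4 * hb * hb1) / (2 * hb * hb1 * ha ^ 2) * u i j
          - 4 * u i (j + 1) / (hb * (hb + hb1)) - 4 * u i (j - 1) / (hb1 * (hb + hb1))
          - u (i + 1) j / ha ^ 2 - u (i - 1) j / ha ^ 2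
          + u i (j + 2) / (2 * hb * (hb + hb1)) + u i (j - 2) / (2 * hb1 * (hb + hb1))
    else
      if j % 2 = 1 then
        -- edge center, edge parallel to the y-axis
        (7 * hb ^ 2 + 4 * ha * ha1) / (2 * ha * ha1 * hb ^ 2) * u i j
          - 4 * u (i + 1) j / (ha * (ha + ha1)) - 4 * u (i - 1) j / (ha1 * (ha + ha1))
          - u i (j + 1) / hb ^ 2 - u i (j - 1) / hb ^ 2
          + u (i + 2) j / (2 * ha * (ha + ha1)) + u (i - 2) j / (2 * ha1 * (ha + ha1))
      else
        -- interior knot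
        7 * (ha * ha1 + hb * hb1) / (2 * ha * ha1 * hb * hb1) * u i j
          - 4 * u (i + 1) j / (ha * (ha + ha1)) - 4 * u (i - 1) j / (ha1 * (ha + ha1))
          - 4 * u i (j + 1) / (hb * (hb + hb1)) - 4 * u i (j - 1) / (hb1 * (hb + hb1))
          + u (i + 2) j / (2 * ha * (ha + ha1)) + u (i - 2) j / (2 * ha1 * (ha + ha1))
          + u i (j + 2) / (2 * hb * (hb + hb1)) + u i (j - 2) / (2 * hb1 * (hb + hb1))

/-- The matrix `L̄_h` of the `Q²` spectral element operator, acting on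
`ℝ^{(n+2)×(n+2)}`, obtained by applying the operator to the standard basis vectors. -/
noncomputable def LhMat (n : ℕ) (p q : ℕ → ℝ) :
    Matrix (Fin (n + 2) × Fin (n + 2)) (Fin (n + 2) × Fin (n + 2)) ℝ :=
  Matrix.of fun x y =>
    LhOp n p q (fun a b => if a = (y.1 : ℕ) ∧ b = (y.2 : ℕ) then 1 else 0) (x.1 : ℕ) (x.2 : ℕ)

/-- The local mesh constraints (4.3) for all pairs of adjacent cells. -/
def MeshConstraints (K : ℕ) (p q : ℕ → ℝ) : Prop :=
  ∀ k m, 1 ≤ k → k ≤ K - 1 → 1 ≤ m → m ≤ K - 1 →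
    p (k + 1) * p k ≥ 7 / 12 * max ((q (m + 1)) ^ 2) ((q m) ^ 2) ∧
    q (m + 1) * q m ≥ 7 / 12 * max ((p (k + 1)) ^ 2) ((p k) ^ 2) ∧
    min (p (k + 1)) (p k) ≥ (1 / Real.sqrt 3) * max (q (m + 1)) (q m) ∧
    min (q (m + 1)) (q m) ≥ (1 / Real.sqrt 3) * max (p (k + 1)) (p k)

/-- The set of boundary grid points of the `(n+2) × (n+2)` grid, as a finite set. -/
def boundarySet (n : ℕ) : Finset (ℕ × ℕ) :=
  (Finset.range (n + 2) ×ˢ Finset.range (n + 2)).filter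
    fun x => x.1 = 0 ∨ x.1 = n + 1 ∨ x.2 = 0 ∨ x.2 = n + 1

lemma boundarySet_nonempty (n : ℕ) : (boundarySet n).Nonempty :=
  ⟨(0, 0), by simp [boundarySet]⟩


section Q2Aux

private lemma mul_np {c x : ℝ} (hc : 0 ≤ c) (hx : x ≤ 0) : c * x ≤ 0 :=
  mul_nonpos_iff.mpr (Or.inl ⟨hc, hx⟩)

private lemma sq3_le {x y : ℝ} (hy : 0 ≤ y) (h : 1 / Real.sqrt 3 * y ≤ x) :
    y ^ 2 ≤ 3 * x ^ 2 := by
  have h3 : (0:ℝ) < Real.sqrt 3 := Real.sqrt_pos.2 (by norm_num)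
  have hy' : y ≤ Real.sqrt 3 * x := by
    have h2 := mul_le_mul_of_nonneg_left h h3.le
    calc y = Real.sqrt 3 * (1 / Real.sqrt 3 * y) := by field_simp
      _ ≤ Real.sqrt 3 * x := h2
  nlinarith [mul_self_le_mul_self hy hy', Real.sq_sqrt (show (0:ℝ) ≤ 3 by norm_num)]

private lemma pick_k {K r : ℕ} (hK : 2 ≤ K) (h1 : 1 ≤ r) (h2 : r ≤ K) :
    ∃ k, 1 ≤ k ∧ k ≤ K - 1 ∧ (r = k ∨ r = k + 1) := by
  rcases le_or_gt r (K - 1) with h | h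
  · exact ⟨r, h1, h, Or.inl rfl⟩
  · exact ⟨r - 1, by omega, by omega, Or.inr (by omega)⟩

private lemma knot_clear (a a1 b b1 z0 zE zW zN zS zEE zWW zNN zSS : ℝ)
    (ha : a ≠ 0) (ha1 : a1 ≠ 0) (hb : b ≠ 0) (hb1 : b1 ≠ 0)
    (hsa : a + a1 ≠ 0) (hsb : b + b1 ≠ 0) :
    2 * a * a1 * b * b1 * (a + a1) * (b + b1) *
      (7 * (a * a1 + b * b1) / (2 * a * a1 * b * b1) * z0
        - 4 * zE / (a * (a + a1)) - 4 * zW / (a1 * (a + a1))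
        - 4 * zN / (b * (b + b1)) - 4 * zS / (b1 * (b + b1))
        + zEE / (2 * a * (a + a1)) + zWW / (2 * a1 * (a + a1))
        + zNN / (2 * b * (b + b1)) + zSS / (2 * b1 * (b + b1)))
    = 7 * (a * a1 + b * b1) * (a + a1) * (b + b1) * z0
        - 8 * a1 * b * b1 * (b + b1) * zE - 8 * a * b * b1 * (b + b1) * zW
        - 8 * a * a1 * b1 * (a + a1) * zN - 8 * a * a1 * b * (a + a1) * zS
        + a1 * b * b1 * (b + b1) * zEE + a * b * b1 * (b + b1) * zWW
        + a * a1 * b1 * (a + a1) * zNN + a * a1 * b * (a + a1) * zSS := by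
  field_simp; ring

private lemma edgex_clear (a b b1 z0 zN zS zE zW zNN zSS : ℝ)
    (ha : a ≠ 0) (hb : b ≠ 0) (hb1 : b1 ≠ 0) (hsb : b + b1 ≠ 0) :
    2 * a ^ 2 * b * b1 * (b + b1) *
      ((7 * a ^ 2 + 4 * b * b1) / (2 * b * b1 * a ^ 2) * z0
        - 4 * zN / (b * (b + b1)) - 4 * zS / (b1 * (b + b1))
        - zE / a ^ 2 - zW / a ^ 2
        + zNN / (2 * b * (b + b1)) + zSS / (2 * b1 * (b + b1)))
    = (7 * a ^ 2 + 4 * b * b1) * (b + b1) * z0 - 8 * a ^ 2 * b1 * zN - 8 * a ^ 2 * b * zS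
        - 2 * b * b1 * (b + b1) * zE - 2 * b * b1 * (b + b1) * zW
        + a ^ 2 * b1 * zNN + a ^ 2 * b * zSS := by
  field_simp; ring

private lemma edgey_clear (a a1 b z0 zE zW zN zS zEE zWW : ℝ)
    (ha : a ≠ 0) (ha1 : a1 ≠ 0) (hb : b ≠ 0) (hsa : a + a1 ≠ 0) :
    2 * b ^ 2 * a * a1 * (a + a1) *
      ((7 * b ^ 2 + 4 * a * a1) / (2 * a * a1 * b ^ 2) * z0
        - 4 * zE / (a * (a + a1)) - 4 * zW / (a1 * (a + a1))
        - zN / b ^ 2 - zS / b ^ 2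
        + zEE / (2 * a * (a + a1)) + zWW / (2 * a1 * (a + a1)))
    = (7 * b ^ 2 + 4 * a * a1) * (a + a1) * z0 - 8 * b ^ 2 * a1 * zE - 8 * b ^ 2 * a * zW
        - 2 * a * a1 * (a + a1) * zN - 2 * a * a1 * (a + a1) * zS
        + b ^ 2 * a1 * zEE + b ^ 2 * a * zWW := by
  field_simp; ring

private lemma cell_clear (a b z zE zW zN zS : ℝ) (ha : a ≠ 0) (hb : b ≠ 0) :
    a ^ 2 * b ^ 2 *
      ((2 * a ^ 2 + 2 * b ^ 2) / (a ^ 2 * b ^ 2) * z - zE / a ^ 2 - zW / a ^ 2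
        - zN / b ^ 2 - zS / b ^ 2)
    = (2 * a ^ 2 + 2 * b ^ 2) * z - b ^ 2 * zE - b ^ 2 * zW - a ^ 2 * zN - a ^ 2 * zS := by
  field_simp

private lemma LhOp_oo (n : ℕ) (p q : ℕ → ℝ) (u : ℕ → ℕ → ℝ) (i j : ℕ)
    (h1 : i % 2 = 1) (h2 : j % 2 = 1) (hb : ¬(i = 0 ∨ i = n + 1 ∨ j = 0 ∨ j = n + 1)) :
    LhOp n p q u i j =
      (2 * p ((i + 1) / 2) ^ 2 + 2 * q ((j + 1) / 2) ^ 2) /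
          (p ((i + 1) / 2) ^ 2 * q ((j + 1) / 2) ^ 2) * u i j
        - u (i + 1) j / p ((i + 1) / 2) ^ 2 - u (i - 1) j / p ((i + 1) / 2) ^ 2
        - u i (j + 1) / q ((j + 1) / 2) ^ 2 - u i (j - 1) / q ((j + 1) / 2) ^ 2 := by
  simp only [LhOp, meshHa, meshHa1, h1, h2, if_neg hb]; norm_num

private lemma LhOp_oe (n : ℕ) (p q : ℕ → ℝ) (u : ℕ → ℕ → ℝ) (i j : ℕ)
    (h1 : i % 2 = 1) (h2 : j % 2 = 0) (hb : ¬(i = 0 ∨ i = n + 1 ∨ j = 0 ∨ j = n + 1)) :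
    LhOp n p q u i j =
      (7 * p ((i + 1) / 2) ^ 2 + 4 * q (j / 2 + 1) * q (j / 2)) /
          (2 * q (j / 2 + 1) * q (j / 2) * p ((i + 1) / 2) ^ 2) * u i j
        - 4 * u i (j + 1) / (q (j / 2 + 1) * (q (j / 2 + 1) + q (j / 2)))
        - 4 * u i (j - 1) / (q (j / 2) * (q (j / 2 + 1) + q (j / 2)))
        - u (i + 1) j / p ((i + 1) / 2) ^ 2 - u (i - 1) j / p ((i + 1) / 2) ^ 2
        + u i (j + 2) / (2 * q (j / 2 + 1) * (q (j / 2 + 1) + q (j / 2)))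
        + u i (j - 2) / (2 * q (j / 2) * (q (j / 2 + 1) + q (j / 2))) := by
  simp only [LhOp, meshHa, meshHa1, h1, h2, if_neg hb]; norm_num

private lemma LhOp_eo (n : ℕ) (p q : ℕ → ℝ) (u : ℕ → ℕ → ℝ) (i j : ℕ)
    (h1 : i % 2 = 0) (h2 : j % 2 = 1) (hb : ¬(i = 0 ∨ i = n + 1 ∨ j = 0 ∨ j = n + 1)) :
    LhOp n p q u i j =
      (7 * q ((j + 1) / 2) ^ 2 + 4 * p (i / 2 + 1) * p (i / 2)) /
          (2 * p (i / 2 + 1) * p (i / 2) * q ((j + 1) / 2) ^ 2) * u i j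
        - 4 * u (i + 1) j / (p (i / 2 + 1) * (p (i / 2 + 1) + p (i / 2)))
        - 4 * u (i - 1) j / (p (i / 2) * (p (i / 2 + 1) + p (i / 2)))
        - u i (j + 1) / q ((j + 1) / 2) ^ 2 - u i (j - 1) / q ((j + 1) / 2) ^ 2
        + u (i + 2) j / (2 * p (i / 2 + 1) * (p (i / 2 + 1) + p (i / 2)))
        + u (i - 2) j / (2 * p (i / 2) * (p (i / 2 + 1) + p (i / 2))) := by
  simp only [LhOp, meshHa, meshHa1, h1, h2, if_neg hb]; norm_num

private lemma LhOp_ee (n : ℕ) (p q : ℕ → ℝ) (u : ℕ → ℕ → ℝ) (i j : ℕ)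
    (h1 : i % 2 = 0) (h2 : j % 2 = 0) (hb : ¬(i = 0 ∨ i = n + 1 ∨ j = 0 ∨ j = n + 1)) :
    LhOp n p q u i j =
      7 * (p (i / 2 + 1) * p (i / 2) + q (j / 2 + 1) * q (j / 2)) /
          (2 * p (i / 2 + 1) * p (i / 2) * q (j / 2 + 1) * q (j / 2)) * u i j
        - 4 * u (i + 1) j / (p (i / 2 + 1) * (p (i / 2 + 1) + p (i / 2)))
        - 4 * u (i - 1) j / (p (i / 2) * (p (i / 2 + 1) + p (i / 2)))
        - 4 * u i (j + 1) / (q (j / 2 + 1) * (q (j / 2 + 1) + q (j / 2)))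
        - 4 * u i (j - 1) / (q (j / 2) * (q (j / 2 + 1) + q (j / 2)))
        + u (i + 2) j / (2 * p (i / 2 + 1) * (p (i / 2 + 1) + p (i / 2)))
        + u (i - 2) j / (2 * p (i / 2) * (p (i / 2 + 1) + p (i / 2)))
        + u i (j + 2) / (2 * q (j / 2 + 1) * (q (j / 2 + 1) + q (j / 2)))
        + u i (j - 2) / (2 * q (j / 2) * (q (j / 2 + 1) + q (j / 2))) := by
  simp only [LhOp, meshHa, meshHa1, h1, h2, if_neg hb]; norm_num

private lemma core_oo (a b z0 zE zW zN zS : ℝ) (hb : 0 < b)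
    (hP0 : (2 * a ^ 2 + 2 * b ^ 2) * z0 - b ^ 2 * zE - b ^ 2 * zW - a ^ 2 * zN
      - a ^ 2 * zS ≤ 0)
    (dE : zE ≤ z0) (dN : zN ≤ z0) (dS : zS ≤ z0) : z0 ≤ zW := by
  have nE : 0 ≤ b ^ 2 * (z0 - zE) := mul_nonneg (by positivity) (by linarith)
  have nN : 0 ≤ a ^ 2 * (z0 - zN) := mul_nonneg (by positivity) (by linarith)
  have nS : 0 ≤ a ^ 2 * (z0 - zS) := mul_nonneg (by positivity) (by linarith)
  have key : b ^ 2 * (z0 - zW) ≤ 0 := by nlinarith [hP0, nE, nN, nS]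
  nlinarith [key, pow_pos hb 2]

private lemma core_oe (a b b1 z0 zN zS zE zW zNN zSS zEN zWN zES zWS : ℝ)
    (ha : 0 < a) (hb : 0 < b) (hb1 : 0 < b1)
    (hB3 : b ^ 2 ≤ 3 * a ^ 2) (hB13 : b1 ^ 2 ≤ 3 * a ^ 2)
    (hP0 : (7 * a ^ 2 + 4 * b * b1) * (b + b1) * z0 - 8 * a ^ 2 * b1 * zN
        - 8 * a ^ 2 * b * zS - 2 * b * b1 * (b + b1) * zE - 2 * b * b1 * (b + b1) * zW
        + a ^ 2 * b1 * zNN + a ^ 2 * b * zSS ≤ 0)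
    (hPN : (2 * a ^ 2 + 2 * b ^ 2) * zN - b ^ 2 * zEN - b ^ 2 * zWN - a ^ 2 * zNN
        - a ^ 2 * z0 ≤ 0)
    (hPS : (2 * a ^ 2 + 2 * b1 ^ 2) * zS - b1 ^ 2 * zES - b1 ^ 2 * zWS - a ^ 2 * z0
        - a ^ 2 * zSS ≤ 0)
    (dN : zN ≤ z0) (dS : zS ≤ z0) (dE : zE ≤ z0)
    (dEN : zEN ≤ z0) (dWN : zWN ≤ z0) (dES : zES ≤ z0) (dWS : zWS ≤ z0) :
    z0 ≤ zW := by
  have TN := mul_np hb1.le hPN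
  have TS := mul_np hb.le hPS
  have nN : 0 ≤ 2 * b1 * (3 * a ^ 2 - b ^ 2) * (z0 - zN) :=
    mul_nonneg (mul_nonneg (by linarith) (by linarith)) (by linarith)
  have nS : 0 ≤ 2 * b * (3 * a ^ 2 - b1 ^ 2) * (z0 - zS) :=
    mul_nonneg (mul_nonneg (by linarith) (by linarith)) (by linarith)
  have nE : 0 ≤ 2 * b * b1 * (b + b1) * (z0 - zE) :=
    mul_nonneg (mul_nonneg (mul_nonneg (by linarith) hb1.le) (by linarith)) (by linarith)
  have nEN : 0 ≤ b * b1 * b * (z0 - zEN) :=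
    mul_nonneg (mul_nonneg (mul_nonneg hb.le hb1.le) hb.le) (by linarith)
  have nWN : 0 ≤ b * b1 * b * (z0 - zWN) :=
    mul_nonneg (mul_nonneg (mul_nonneg hb.le hb1.le) hb.le) (by linarith)
  have nES : 0 ≤ b * b1 * b1 * (z0 - zES) :=
    mul_nonneg (mul_nonneg (mul_nonneg hb.le hb1.le) hb1.le) (by linarith)
  have nWS : 0 ≤ b * b1 * b1 * (z0 - zWS) :=
    mul_nonneg (mul_nonneg (mul_nonneg hb.le hb1.le) hb1.le) (by linarith)
  have key : 2 * b * b1 * (b + b1) * (z0 - zW) ≤ 0 := by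
    linarith [hP0, TN, TS, nN, nS, nE, nEN, nWN, nES, nWS]
  nlinarith [key, mul_pos (mul_pos (mul_pos (show (0:ℝ) < 2 by norm_num) hb) hb1)
    (show (0:ℝ) < b + b1 by linarith)]

private lemma core_eo (a a1 b z0 zE zW zN zS zEE zWW zEN zES zWN zWS : ℝ)
    (ha : 0 < a) (ha1 : 0 < a1) (hb : 0 < b)
    (hA3 : a ^ 2 ≤ 3 * b ^ 2) (hA13 : a1 ^ 2 ≤ 3 * b ^ 2)
    (hP0 : (7 * b ^ 2 + 4 * a * a1) * (a + a1) * z0 - 8 * b ^ 2 * a1 * zE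
        - 8 * b ^ 2 * a * zW - 2 * a * a1 * (a + a1) * zN - 2 * a * a1 * (a + a1) * zS
        + b ^ 2 * a1 * zEE + b ^ 2 * a * zWW ≤ 0)
    (hPE : (2 * a ^ 2 + 2 * b ^ 2) * zE - b ^ 2 * zEE - b ^ 2 * z0 - a ^ 2 * zEN
        - a ^ 2 * zES ≤ 0)
    (hPW : (2 * a1 ^ 2 + 2 * b ^ 2) * zW - b ^ 2 * z0 - b ^ 2 * zWW - a1 ^ 2 * zWN
        - a1 ^ 2 * zWS ≤ 0)
    (dE : zE ≤ z0) (dW : zW ≤ z0) (dN : zN ≤ z0) (dS : zS ≤ z0)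
    (dEN : zEN ≤ z0) (dES : zES ≤ z0) (dWS : zWS ≤ z0) :
    z0 ≤ zWN := by
  have TE := mul_np ha1.le hPE
  have TW := mul_np ha.le hPW
  have nE : 0 ≤ 2 * a1 * (3 * b ^ 2 - a ^ 2) * (z0 - zE) :=
    mul_nonneg (mul_nonneg (by linarith) (by linarith)) (by linarith)
  have nW : 0 ≤ 2 * a * (3 * b ^ 2 - a1 ^ 2) * (z0 - zW) :=
    mul_nonneg (mul_nonneg (by linarith) (by linarith)) (by linarith)
  have nN : 0 ≤ 2 * a * a1 * (a + a1) * (z0 - zN) :=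
    mul_nonneg (mul_nonneg (mul_nonneg (by linarith) ha1.le) (by linarith)) (by linarith)
  have nS : 0 ≤ 2 * a * a1 * (a + a1) * (z0 - zS) :=
    mul_nonneg (mul_nonneg (mul_nonneg (by linarith) ha1.le) (by linarith)) (by linarith)
  have nEN : 0 ≤ a * a1 * a * (z0 - zEN) :=
    mul_nonneg (mul_nonneg (mul_nonneg ha.le ha1.le) ha.le) (by linarith)
  have nES : 0 ≤ a * a1 * a * (z0 - zES) :=
    mul_nonneg (mul_nonneg (mul_nonneg ha.le ha1.le) ha.le) (by linarith)
  have nWS : 0 ≤ a * a1 * a1 * (z0 - zWS) :=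
    mul_nonneg (mul_nonneg (mul_nonneg ha.le ha1.le) ha1.le) (by linarith)
  have key : a * a1 * a1 * (z0 - zWN) ≤ 0 := by
    linarith [hP0, TE, TW, nE, nW, nN, nS, nEN, nES, nWS]
  nlinarith [key, mul_pos (mul_pos ha ha1) ha1]

set_option maxHeartbeats 1000000 in
private lemma core_ee (a a1 b b1 z0 zE zW zN zS zEE zWW zNN zSS zEN zES zWN zWS
    zENN zESS zWNN zWSS zEEN zEES zWWN zWWS : ℝ)
    (ha : 0 < a) (ha1 : 0 < a1) (hb : 0 < b) (hb1 : 0 < b1)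
    (h2a : 0 ≤ 2 * b * b1 - a ^ 2) (h2a1 : 0 ≤ 2 * b * b1 - a1 ^ 2)
    (h2b : 0 ≤ 2 * a * a1 - b ^ 2) (h2b1 : 0 ≤ 2 * a * a1 - b1 ^ 2)
    (hP0 : 7 * (a * a1 + b * b1) * (a + a1) * (b + b1) * z0
        - 8 * a1 * b * b1 * (b + b1) * zE - 8 * a * b * b1 * (b + b1) * zW
        - 8 * a * a1 * b1 * (a + a1) * zN - 8 * a * a1 * b * (a + a1) * zS
        + a1 * b * b1 * (b + b1) * zEE + a * b * b1 * (b + b1) * zWW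
        + a * a1 * b1 * (a + a1) * zNN + a * a1 * b * (a + a1) * zSS ≤ 0)
    (hPE : (7 * a ^ 2 + 4 * b * b1) * (b + b1) * zE - 8 * a ^ 2 * b1 * zEN
        - 8 * a ^ 2 * b * zES - 2 * b * b1 * (b + b1) * zEE - 2 * b * b1 * (b + b1) * z0
        + a ^ 2 * b1 * zENN + a ^ 2 * b * zESS ≤ 0)
    (hPW : (7 * a1 ^ 2 + 4 * b * b1) * (b + b1) * zW - 8 * a1 ^ 2 * b1 * zWN
        - 8 * a1 ^ 2 * b * zWS - 2 * b * b1 * (b + b1) * z0 - 2 * b * b1 * (b + b1) * zWW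
        + a1 ^ 2 * b1 * zWNN + a1 ^ 2 * b * zWSS ≤ 0)
    (hPN : (7 * b ^ 2 + 4 * a * a1) * (a + a1) * zN - 8 * b ^ 2 * a1 * zEN
        - 8 * b ^ 2 * a * zWN - 2 * a * a1 * (a + a1) * zNN - 2 * a * a1 * (a + a1) * z0
        + b ^ 2 * a1 * zEEN + b ^ 2 * a * zWWN ≤ 0)
    (hPS : (7 * b1 ^ 2 + 4 * a * a1) * (a + a1) * zS - 8 * b1 ^ 2 * a1 * zES
        - 8 * b1 ^ 2 * a * zWS - 2 * a * a1 * (a + a1) * z0 - 2 * a * a1 * (a + a1) * zSS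
        + b1 ^ 2 * a1 * zEES + b1 ^ 2 * a * zWWS ≤ 0)
    (hPEN : (2 * a ^ 2 + 2 * b ^ 2) * zEN - b ^ 2 * zEEN - b ^ 2 * zN
        - a ^ 2 * zENN - a ^ 2 * zE ≤ 0)
    (hPES : (2 * a ^ 2 + 2 * b1 ^ 2) * zES - b1 ^ 2 * zEES - b1 ^ 2 * zS
        - a ^ 2 * zE - a ^ 2 * zESS ≤ 0)
    (hPWN : (2 * a1 ^ 2 + 2 * b ^ 2) * zWN - b ^ 2 * zN - b ^ 2 * zWWN
        - a1 ^ 2 * zWNN - a1 ^ 2 * zW ≤ 0)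
    (hPWS : (2 * a1 ^ 2 + 2 * b1 ^ 2) * zWS - b1 ^ 2 * zS - b1 ^ 2 * zWWS
        - a1 ^ 2 * zW - a1 ^ 2 * zWSS ≤ 0)
    (dE : zE ≤ z0) (dW : zW ≤ z0) (dN : zN ≤ z0) (dS : zS ≤ z0)
    (dEN : zEN ≤ z0) (dES : zES ≤ z0) (dWS : zWS ≤ z0) :
    z0 ≤ zWN := by
  have T0 := mul_np (show (0:ℝ) ≤ 2 by norm_num) hP0
  have TE := mul_np ha1.le hPE
  have TW := mul_np ha.le hPW
  have TN := mul_np hb1.le hPN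
  have TS := mul_np hb.le hPS
  have TEN := mul_np (mul_nonneg ha1.le hb1.le) hPEN
  have TES := mul_np (mul_nonneg ha1.le hb.le) hPES
  have TWN := mul_np (mul_nonneg ha.le hb1.le) hPWN
  have TWS := mul_np (mul_nonneg ha.le hb.le) hPWS
  have nE : 0 ≤ 6 * a1 * (b + b1) * (2 * b * b1 - a ^ 2) * (z0 - zE) :=
    mul_nonneg (mul_nonneg (mul_nonneg (by linarith) (by linarith)) h2a) (by linarith)
  have nW : 0 ≤ 6 * a * (b + b1) * (2 * b * b1 - a1 ^ 2) * (z0 - zW) :=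
    mul_nonneg (mul_nonneg (mul_nonneg (by linarith) (by linarith)) h2a1) (by linarith)
  have nN : 0 ≤ 6 * b1 * (a + a1) * (2 * a * a1 - b ^ 2) * (z0 - zN) :=
    mul_nonneg (mul_nonneg (mul_nonneg (by linarith) (by linarith)) h2b) (by linarith)
  have nS : 0 ≤ 6 * b * (a + a1) * (2 * a * a1 - b1 ^ 2) * (z0 - zS) :=
    mul_nonneg (mul_nonneg (mul_nonneg (by linarith) (by linarith)) h2b1) (by linarith)
  have nEN : 0 ≤ 6 * a1 * b1 * (a ^ 2 + b ^ 2) * (z0 - zEN) :=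
    mul_nonneg (mul_nonneg (mul_nonneg (by linarith) hb1.le) (by positivity)) (by linarith)
  have nES : 0 ≤ 6 * a1 * b * (a ^ 2 + b1 ^ 2) * (z0 - zES) :=
    mul_nonneg (mul_nonneg (mul_nonneg (by linarith) hb.le) (by positivity)) (by linarith)
  have nWS : 0 ≤ 6 * a * b * (a1 ^ 2 + b1 ^ 2) * (z0 - zWS) :=
    mul_nonneg (mul_nonneg (mul_nonneg (by linarith) hb.le) (by positivity)) (by linarith)
  have key : 6 * a * b1 * (a1 ^ 2 + b ^ 2) * (z0 - zWN) ≤ 0 := by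
    linarith [T0, TE, TW, TN, TS, TEN, TES, TWN, TWS, nE, nW, nN, nS, nEN, nES, nWS]
  nlinarith [key, mul_pos (mul_pos (show (0:ℝ) < 6 * a by linarith) hb1)
    (show (0:ℝ) < a1 ^ 2 + b ^ 2 by positivity)]

set_option maxHeartbeats 1000000 in
private lemma descent (n : ℕ) (p q : ℕ → ℝ) (u : ℕ → ℕ → ℝ) (M : ℝ)
    (hn2 : n % 2 = 1)
    (hp : ∀ k, 1 ≤ k → k ≤ (n + 1) / 2 → 0 < p k)
    (hq : ∀ k, 1 ≤ k → k ≤ (n + 1) / 2 → 0 < q k)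
    (hmesh : MeshConstraints ((n + 1) / 2) p q)
    (hu : ∀ i j, 1 ≤ i → i ≤ n → 1 ≤ j → j ≤ n → LhOp n p q u i j ≤ 0)
    (hM : ∀ x y, x ≤ n + 1 → y ≤ n + 1 → u x y ≤ M)
    (i j : ℕ) (hi1 : 1 ≤ i) (hin : i ≤ n) (hj1 : 1 ≤ j) (hjn : j ≤ n)
    (hij : u i j = M) :
    ∃ i' j', i' < i ∧ i' ≤ n + 1 ∧ j' ≤ n + 1 ∧ u i' j' = M := by
  have hd : ∀ x y, x ≤ n + 1 → y ≤ n + 1 → u x y ≤ u i j := by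
    intro x y hx hy; rw [hij]; exact hM x y hx hy
  have hs3 : (0:ℝ) ≤ 1 / Real.sqrt 3 := by positivity
  rcases Nat.mod_two_eq_zero_or_one i with hi2 | hi2 <;>
    rcases Nat.mod_two_eq_zero_or_one j with hj2 | hj2
  · -- i even, j even : interior knot
    have hA : 0 < p (i / 2 + 1) := hp _ (by omega) (by omega)
    have hA1 : 0 < p (i / 2) := hp _ (by omega) (by omega)
    have hB : 0 < q (j / 2 + 1) := hq _ (by omega) (by omega)
    have hB1 : 0 < q (j / 2) := hq _ (by omega) (by omega)
    have hsa : (0:ℝ) < p (i / 2 + 1) + p (i / 2) := by linarith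
    have hsb : (0:ℝ) < q (j / 2 + 1) + q (j / 2) := by linarith
    obtain ⟨hcp, hcq, -, -⟩ := hmesh (i / 2) (j / 2) (by omega) (by omega) (by omega) (by omega)
    have h2a : (0:ℝ) ≤ 2 * q (j / 2 + 1) * q (j / 2) - p (i / 2 + 1) ^ 2 := by
      have := le_max_left (p (i / 2 + 1) ^ 2) (p (i / 2) ^ 2)
      nlinarith [sq_nonneg (p (i / 2 + 1))]
    have h2a1 : (0:ℝ) ≤ 2 * q (j / 2 + 1) * q (j / 2) - p (i / 2) ^ 2 := by
      have := le_max_right (p (i / 2 + 1) ^ 2) (p (i / 2) ^ 2)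
      nlinarith [sq_nonneg (p (i / 2))]
    have h2b : (0:ℝ) ≤ 2 * p (i / 2 + 1) * p (i / 2) - q (j / 2 + 1) ^ 2 := by
      have := le_max_left (q (j / 2 + 1) ^ 2) (q (j / 2) ^ 2)
      nlinarith [sq_nonneg (q (j / 2 + 1))]
    have h2b1 : (0:ℝ) ≤ 2 * p (i / 2 + 1) * p (i / 2) - q (j / 2) ^ 2 := by
      have := le_max_right (q (j / 2 + 1) ^ 2) (q (j / 2) ^ 2)
      nlinarith [sq_nonneg (q (j / 2))]
    have hr0 := hu i j hi1 hin hj1 hjn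
    rw [LhOp_ee n p q u i j hi2 hj2 (by omega)] at hr0
    have hrE := hu (i + 1) j (by omega) (by omega) hj1 hjn
    rw [LhOp_oe n p q u (i + 1) j (by omega) hj2 (by omega),
      show i + 1 + 1 = i + 2 from by omega, show (i + 2) / 2 = i / 2 + 1 from by omega,
      show i + 1 - 1 = i from by omega] at hrE
    have hrW := hu (i - 1) j (by omega) (by omega) hj1 hjn
    rw [LhOp_oe n p q u (i - 1) j (by omega) hj2 (by omega),
      show i - 1 + 1 = i from by omega, show i - 1 - 1 = i - 2 from by omega] at hrW
    have hrN := hu i (j + 1) hi1 hin (by omega) (by omega)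
    rw [LhOp_eo n p q u i (j + 1) hi2 (by omega) (by omega),
      show j + 1 + 1 = j + 2 from by omega, show (j + 2) / 2 = j / 2 + 1 from by omega,
      show j + 1 - 1 = j from by omega] at hrN
    have hrS := hu i (j - 1) hi1 hin (by omega) (by omega)
    rw [LhOp_eo n p q u i (j - 1) hi2 (by omega) (by omega),
      show j - 1 + 1 = j from by omega, show j - 1 - 1 = j - 2 from by omega] at hrS
    have hrEN := hu (i + 1) (j + 1) (by omega) (by omega) (by omega) (by omega)
    rw [LhOp_oo n p q u (i + 1) (j + 1) (by omega) (by omega) (by omega),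
      show i + 1 + 1 = i + 2 from by omega, show (i + 2) / 2 = i / 2 + 1 from by omega,
      show i + 1 - 1 = i from by omega,
      show j + 1 + 1 = j + 2 from by omega, show (j + 2) / 2 = j / 2 + 1 from by omega,
      show j + 1 - 1 = j from by omega] at hrEN
    have hrES := hu (i + 1) (j - 1) (by omega) (by omega) (by omega) (by omega)
    rw [LhOp_oo n p q u (i + 1) (j - 1) (by omega) (by omega) (by omega),
      show i + 1 + 1 = i + 2 from by omega, show (i + 2) / 2 = i / 2 + 1 from by omega,
      show i + 1 - 1 = i from by omega,
      show j - 1 + 1 = j from by omega, show j - 1 - 1 = j - 2 from by omega] at hrES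
    have hrWN := hu (i - 1) (j + 1) (by omega) (by omega) (by omega) (by omega)
    rw [LhOp_oo n p q u (i - 1) (j + 1) (by omega) (by omega) (by omega),
      show i - 1 + 1 = i from by omega, show i - 1 - 1 = i - 2 from by omega,
      show j + 1 + 1 = j + 2 from by omega, show (j + 2) / 2 = j / 2 + 1 from by omega,
      show j + 1 - 1 = j from by omega] at hrWN
    have hrWS := hu (i - 1) (j - 1) (by omega) (by omega) (by omega) (by omega)
    rw [LhOp_oo n p q u (i - 1) (j - 1) (by omega) (by omega) (by omega),
      show i - 1 + 1 = i from by omega, show i - 1 - 1 = i - 2 from by omega,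
      show j - 1 + 1 = j from by omega, show j - 1 - 1 = j - 2 from by omega] at hrWS
    have hP0 := (knot_clear (p (i / 2 + 1)) (p (i / 2)) (q (j / 2 + 1)) (q (j / 2))
        (u i j) (u (i + 1) j) (u (i - 1) j) (u i (j + 1)) (u i (j - 1))
        (u (i + 2) j) (u (i - 2) j) (u i (j + 2)) (u i (j - 2))
        hA.ne' hA1.ne' hB.ne' hB1.ne' hsa.ne' hsb.ne').symm.trans_le
      (mul_np (mul_pos (mul_pos (mul_pos (mul_pos (mul_pos
          (mul_pos (show (0:ℝ) < 2 by norm_num) hA) hA1) hB) hB1) hsa) hsb).le hr0)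
    have hPE := (edgex_clear (p (i / 2 + 1)) (q (j / 2 + 1)) (q (j / 2))
        (u (i + 1) j) (u (i + 1) (j + 1)) (u (i + 1) (j - 1)) (u (i + 2) j) (u i j)
        (u (i + 1) (j + 2)) (u (i + 1) (j - 2)) hA.ne' hB.ne' hB1.ne' hsb.ne').symm.trans_le
      (mul_np (mul_pos (mul_pos (mul_pos (mul_pos (show (0:ℝ) < 2 by norm_num)
          (pow_pos hA 2)) hB) hB1) hsb).le hrE)
    have hPW := (edgex_clear (p (i / 2)) (q (j / 2 + 1)) (q (j / 2))
        (u (i - 1) j) (u (i - 1) (j + 1)) (u (i - 1) (j - 1)) (u i j) (u (i - 2) j)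
        (u (i - 1) (j + 2)) (u (i - 1) (j - 2)) hA1.ne' hB.ne' hB1.ne' hsb.ne').symm.trans_le
      (mul_np (mul_pos (mul_pos (mul_pos (mul_pos (show (0:ℝ) < 2 by norm_num)
          (pow_pos hA1 2)) hB) hB1) hsb).le hrW)
    have hPN := (edgey_clear (p (i / 2 + 1)) (p (i / 2)) (q (j / 2 + 1))
        (u i (j + 1)) (u (i + 1) (j + 1)) (u (i - 1) (j + 1)) (u i (j + 2)) (u i j)
        (u (i + 2) (j + 1)) (u (i - 2) (j + 1)) hA.ne' hA1.ne' hB.ne' hsa.ne').symm.trans_le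
      (mul_np (mul_pos (mul_pos (mul_pos (mul_pos (show (0:ℝ) < 2 by norm_num)
          (pow_pos hB 2)) hA) hA1) hsa).le hrN)
    have hPS := (edgey_clear (p (i / 2 + 1)) (p (i / 2)) (q (j / 2))
        (u i (j - 1)) (u (i + 1) (j - 1)) (u (i - 1) (j - 1)) (u i j) (u i (j - 2))
        (u (i + 2) (j - 1)) (u (i - 2) (j - 1)) hA.ne' hA1.ne' hB1.ne' hsa.ne').symm.trans_le
      (mul_np (mul_pos (mul_pos (mul_pos (mul_pos (show (0:ℝ) < 2 by norm_num)
          (pow_pos hB1 2)) hA) hA1) hsa).le hrS)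
    have hPEN := (cell_clear (p (i / 2 + 1)) (q (j / 2 + 1)) (u (i + 1) (j + 1))
        (u (i + 2) (j + 1)) (u i (j + 1)) (u (i + 1) (j + 2)) (u (i + 1) j)
        hA.ne' hB.ne').symm.trans_le
      (mul_np (mul_pos (pow_pos hA 2) (pow_pos hB 2)).le hrEN)
    have hPES := (cell_clear (p (i / 2 + 1)) (q (j / 2)) (u (i + 1) (j - 1))
        (u (i + 2) (j - 1)) (u i (j - 1)) (u (i + 1) j) (u (i + 1) (j - 2))
        hA.ne' hB1.ne').symm.trans_le
      (mul_np (mul_pos (pow_pos hA 2) (pow_pos hB1 2)).le hrES)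
    have hPWN := (cell_clear (p (i / 2)) (q (j / 2 + 1)) (u (i - 1) (j + 1))
        (u i (j + 1)) (u (i - 2) (j + 1)) (u (i - 1) (j + 2)) (u (i - 1) j)
        hA1.ne' hB.ne').symm.trans_le
      (mul_np (mul_pos (pow_pos hA1 2) (pow_pos hB 2)).le hrWN)
    have hPWS := (cell_clear (p (i / 2)) (q (j / 2)) (u (i - 1) (j - 1))
        (u i (j - 1)) (u (i - 2) (j - 1)) (u (i - 1) j) (u (i - 1) (j - 2))
        hA1.ne' hB1.ne').symm.trans_le
      (mul_np (mul_pos (pow_pos hA1 2) (pow_pos hB1 2)).le hrWS)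
    have hkey := core_ee (p (i / 2 + 1)) (p (i / 2)) (q (j / 2 + 1)) (q (j / 2))
      (u i j) (u (i + 1) j) (u (i - 1) j) (u i (j + 1)) (u i (j - 1))
      (u (i + 2) j) (u (i - 2) j) (u i (j + 2)) (u i (j - 2))
      (u (i + 1) (j + 1)) (u (i + 1) (j - 1)) (u (i - 1) (j + 1)) (u (i - 1) (j - 1))
      (u (i + 1) (j + 2)) (u (i + 1) (j - 2)) (u (i - 1) (j + 2)) (u (i - 1) (j - 2))
      (u (i + 2) (j + 1)) (u (i + 2) (j - 1)) (u (i - 2) (j + 1)) (u (i - 2) (j - 1))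
      hA hA1 hB hB1 h2a h2a1 h2b h2b1 hP0 hPE hPW hPN hPS hPEN hPES hPWN hPWS
      (hd (i + 1) j (by omega) (by omega)) (hd (i - 1) j (by omega) (by omega))
      (hd i (j + 1) (by omega) (by omega)) (hd i (j - 1) (by omega) (by omega))
      (hd (i + 1) (j + 1) (by omega) (by omega)) (hd (i + 1) (j - 1) (by omega) (by omega))
      (hd (i - 1) (j - 1) (by omega) (by omega))
    exact ⟨i - 1, j + 1, by omega, by omega, by omega,
      le_antisymm (hM _ _ (by omega) (by omega)) (hij ▸ hkey)⟩
  · -- i even, j odd : edge center, edge parallel to the y-axis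
    have hA : 0 < p (i / 2 + 1) := hp _ (by omega) (by omega)
    have hA1 : 0 < p (i / 2) := hp _ (by omega) (by omega)
    have hB : 0 < q ((j + 1) / 2) := hq _ (by omega) (by omega)
    have hsa : (0:ℝ) < p (i / 2 + 1) + p (i / 2) := by linarith
    obtain ⟨m, hm1, hm2, hmr⟩ := pick_k (K := (n + 1) / 2) (r := (j + 1) / 2)
      (by omega) (by omega) (by omega)
    obtain ⟨-, -, -, hc4⟩ := hmesh (i / 2) m (by omega) (by omega) hm1 hm2
    have hqmin : min (q (m + 1)) (q m) ≤ q ((j + 1) / 2) := by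
      rcases hmr with h | h
      · rw [h]; exact min_le_right _ _
      · rw [h]; exact min_le_left _ _
    have hA3 : p (i / 2 + 1) ^ 2 ≤ 3 * q ((j + 1) / 2) ^ 2 := by
      refine sq3_le hA.le ?_
      calc 1 / Real.sqrt 3 * p (i / 2 + 1)
          ≤ 1 / Real.sqrt 3 * max (p (i / 2 + 1)) (p (i / 2)) :=
            mul_le_mul_of_nonneg_left (le_max_left _ _) hs3
        _ ≤ min (q (m + 1)) (q m) := hc4
        _ ≤ q ((j + 1) / 2) := hqmin
    have hA13 : p (i / 2) ^ 2 ≤ 3 * q ((j + 1) / 2) ^ 2 := by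
      refine sq3_le hA1.le ?_
      calc 1 / Real.sqrt 3 * p (i / 2)
          ≤ 1 / Real.sqrt 3 * max (p (i / 2 + 1)) (p (i / 2)) :=
            mul_le_mul_of_nonneg_left (le_max_right _ _) hs3
        _ ≤ min (q (m + 1)) (q m) := hc4
        _ ≤ q ((j + 1) / 2) := hqmin
    have hr0 := hu i j hi1 hin hj1 hjn
    rw [LhOp_eo n p q u i j hi2 hj2 (by omega)] at hr0
    have hrE := hu (i + 1) j (by omega) (by omega) hj1 hjn
    rw [LhOp_oo n p q u (i + 1) j (by omega) hj2 (by omega),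
      show i + 1 + 1 = i + 2 from by omega, show (i + 2) / 2 = i / 2 + 1 from by omega,
      show i + 1 - 1 = i from by omega] at hrE
    have hrW := hu (i - 1) j (by omega) (by omega) hj1 hjn
    rw [LhOp_oo n p q u (i - 1) j (by omega) hj2 (by omega),
      show i - 1 + 1 = i from by omega, show i - 1 - 1 = i - 2 from by omega] at hrW
    have hP0 := (edgey_clear (p (i / 2 + 1)) (p (i / 2)) (q ((j + 1) / 2))
        (u i j) (u (i + 1) j) (u (i - 1) j) (u i (j + 1)) (u i (j - 1))
        (u (i + 2) j) (u (i - 2) j) hA.ne' hA1.ne' hB.ne' hsa.ne').symm.trans_le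
      (mul_np (mul_pos (mul_pos (mul_pos (mul_pos (show (0:ℝ) < 2 by norm_num)
          (pow_pos hB 2)) hA) hA1) hsa).le hr0)
    have hPE := (cell_clear (p (i / 2 + 1)) (q ((j + 1) / 2)) (u (i + 1) j)
        (u (i + 2) j) (u i j) (u (i + 1) (j + 1)) (u (i + 1) (j - 1))
        hA.ne' hB.ne').symm.trans_le
      (mul_np (mul_pos (pow_pos hA 2) (pow_pos hB 2)).le hrE)
    have hPW := (cell_clear (p (i / 2)) (q ((j + 1) / 2)) (u (i - 1) j)
        (u i j) (u (i - 2) j) (u (i - 1) (j + 1)) (u (i - 1) (j - 1))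
        hA1.ne' hB.ne').symm.trans_le
      (mul_np (mul_pos (pow_pos hA1 2) (pow_pos hB 2)).le hrW)
    have hkey := core_eo (p (i / 2 + 1)) (p (i / 2)) (q ((j + 1) / 2))
      (u i j) (u (i + 1) j) (u (i - 1) j) (u i (j + 1)) (u i (j - 1))
      (u (i + 2) j) (u (i - 2) j)
      (u (i + 1) (j + 1)) (u (i + 1) (j - 1)) (u (i - 1) (j + 1)) (u (i - 1) (j - 1))
      hA hA1 hB hA3 hA13 hP0 hPE hPW
      (hd (i + 1) j (by omega) (by omega)) (hd (i - 1) j (by omega) (by omega))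
      (hd i (j + 1) (by omega) (by omega)) (hd i (j - 1) (by omega) (by omega))
      (hd (i + 1) (j + 1) (by omega) (by omega)) (hd (i + 1) (j - 1) (by omega) (by omega))
      (hd (i - 1) (j - 1) (by omega) (by omega))
    exact ⟨i - 1, j + 1, by omega, by omega, by omega,
      le_antisymm (hM _ _ (by omega) (by omega)) (hij ▸ hkey)⟩
  · -- i odd, j even : edge center, edge parallel to the x-axis
    have hA : 0 < p ((i + 1) / 2) := hp _ (by omega) (by omega)
    have hB : 0 < q (j / 2 + 1) := hq _ (by omega) (by omega)
    have hB1 : 0 < q (j / 2) := hq _ (by omega) (by omega)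
    have hsb : (0:ℝ) < q (j / 2 + 1) + q (j / 2) := by linarith
    obtain ⟨k, hk1, hk2, hkr⟩ := pick_k (K := (n + 1) / 2) (r := (i + 1) / 2)
      (by omega) (by omega) (by omega)
    obtain ⟨-, -, hc3, -⟩ := hmesh k (j / 2) hk1 hk2 (by omega) (by omega)
    have hpmin : min (p (k + 1)) (p k) ≤ p ((i + 1) / 2) := by
      rcases hkr with h | h
      · rw [h]; exact min_le_right _ _
      · rw [h]; exact min_le_left _ _
    have hB3 : q (j / 2 + 1) ^ 2 ≤ 3 * p ((i + 1) / 2) ^ 2 := by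
      refine sq3_le hB.le ?_
      calc 1 / Real.sqrt 3 * q (j / 2 + 1)
          ≤ 1 / Real.sqrt 3 * max (q (j / 2 + 1)) (q (j / 2)) :=
            mul_le_mul_of_nonneg_left (le_max_left _ _) hs3
        _ ≤ min (p (k + 1)) (p k) := hc3
        _ ≤ p ((i + 1) / 2) := hpmin
    have hB13 : q (j / 2) ^ 2 ≤ 3 * p ((i + 1) / 2) ^ 2 := by
      refine sq3_le hB1.le ?_
      calc 1 / Real.sqrt 3 * q (j / 2)
          ≤ 1 / Real.sqrt 3 * max (q (j / 2 + 1)) (q (j / 2)) :=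
            mul_le_mul_of_nonneg_left (le_max_right _ _) hs3
        _ ≤ min (p (k + 1)) (p k) := hc3
        _ ≤ p ((i + 1) / 2) := hpmin
    have hr0 := hu i j hi1 hin hj1 hjn
    rw [LhOp_oe n p q u i j hi2 hj2 (by omega)] at hr0
    have hrN := hu i (j + 1) hi1 hin (by omega) (by omega)
    rw [LhOp_oo n p q u i (j + 1) hi2 (by omega) (by omega),
      show j + 1 + 1 = j + 2 from by omega, show (j + 2) / 2 = j / 2 + 1 from by omega,
      show j + 1 - 1 = j from by omega] at hrN
    have hrS := hu i (j - 1) hi1 hin (by omega) (by omega)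
    rw [LhOp_oo n p q u i (j - 1) hi2 (by omega) (by omega),
      show j - 1 + 1 = j from by omega, show j - 1 - 1 = j - 2 from by omega] at hrS
    have hP0 := (edgex_clear (p ((i + 1) / 2)) (q (j / 2 + 1)) (q (j / 2))
        (u i j) (u i (j + 1)) (u i (j - 1)) (u (i + 1) j) (u (i - 1) j)
        (u i (j + 2)) (u i (j - 2)) hA.ne' hB.ne' hB1.ne' hsb.ne').symm.trans_le
      (mul_np (mul_pos (mul_pos (mul_pos (mul_pos (show (0:ℝ) < 2 by norm_num)
          (pow_pos hA 2)) hB) hB1) hsb).le hr0)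
    have hPN := (cell_clear (p ((i + 1) / 2)) (q (j / 2 + 1)) (u i (j + 1))
        (u (i + 1) (j + 1)) (u (i - 1) (j + 1)) (u i (j + 2)) (u i j)
        hA.ne' hB.ne').symm.trans_le
      (mul_np (mul_pos (pow_pos hA 2) (pow_pos hB 2)).le hrN)
    have hPS := (cell_clear (p ((i + 1) / 2)) (q (j / 2)) (u i (j - 1))
        (u (i + 1) (j - 1)) (u (i - 1) (j - 1)) (u i j) (u i (j - 2))
        hA.ne' hB1.ne').symm.trans_le
      (mul_np (mul_pos (pow_pos hA 2) (pow_pos hB1 2)).le hrS)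
    have hkey := core_oe (p ((i + 1) / 2)) (q (j / 2 + 1)) (q (j / 2))
      (u i j) (u i (j + 1)) (u i (j - 1)) (u (i + 1) j) (u (i - 1) j)
      (u i (j + 2)) (u i (j - 2))
      (u (i + 1) (j + 1)) (u (i - 1) (j + 1)) (u (i + 1) (j - 1)) (u (i - 1) (j - 1))
      hA hB hB1 hB3 hB13 hP0 hPN hPS
      (hd i (j + 1) (by omega) (by omega)) (hd i (j - 1) (by omega) (by omega))
      (hd (i + 1) j (by omega) (by omega))
      (hd (i + 1) (j + 1) (by omega) (by omega)) (hd (i - 1) (j + 1) (by omega) (by omega))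
      (hd (i + 1) (j - 1) (by omega) (by omega)) (hd (i - 1) (j - 1) (by omega) (by omega))
    exact ⟨i - 1, j, by omega, by omega, by omega,
      le_antisymm (hM _ _ (by omega) (by omega)) (hij ▸ hkey)⟩
  · -- i odd, j odd : cell center
    have hA : 0 < p ((i + 1) / 2) := hp _ (by omega) (by omega)
    have hB : 0 < q ((j + 1) / 2) := hq _ (by omega) (by omega)
    have hr0 := hu i j hi1 hin hj1 hjn
    rw [LhOp_oo n p q u i j hi2 hj2 (by omega)] at hr0
    have hP0 := (cell_clear (p ((i + 1) / 2)) (q ((j + 1) / 2)) (u i j)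
        (u (i + 1) j) (u (i - 1) j) (u i (j + 1)) (u i (j - 1))
        hA.ne' hB.ne').symm.trans_le
      (mul_np (mul_pos (pow_pos hA 2) (pow_pos hB 2)).le hr0)
    have hkey := core_oo (p ((i + 1) / 2)) (q ((j + 1) / 2)) (u i j)
      (u (i + 1) j) (u (i - 1) j) (u i (j + 1)) (u i (j - 1)) hB hP0
      (hd (i + 1) j (by omega) (by omega))
      (hd i (j + 1) (by omega) (by omega)) (hd i (j - 1) (by omega) (by omega))
    exact ⟨i - 1, j, by omega, by omega, by omega,
      le_antisymm (hM _ _ (by omega) (by omega)) (hij ▸ hkey)⟩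

end Q2Aux

theorem Q2_discrete_maximum_principle
    (n : ℕ) (hodd : Odd n) (hn : 0 < n) (p q : ℕ → ℝ)
    (hp : ∀ k, 1 ≤ k → k ≤ (n + 1) / 2 → 0 < p k)
    (hq : ∀ k, 1 ≤ k → k ≤ (n + 1) / 2 → 0 < q k)
    (hmesh : MeshConstraints ((n + 1) / 2) p q)
    (u : ℕ → ℕ → ℝ)
    (hu : ∀ i j, 1 ≤ i → i ≤ n → 1 ≤ j → j ≤ n → LhOp n p q u i j ≤ 0) :
    ∀ i j, 1 ≤ i → i ≤ n → 1 ≤ j → j ≤ n →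
      u i j ≤ max 0 ((boundarySet n).sup' (boundarySet_nonempty n) fun x => u x.1 x.2) := by
  intro i j hi1 hin hj1 hjn
  have hn2 : n % 2 = 1 := Nat.odd_iff.mp hodd
  have hGne : (Finset.range (n + 2) ×ˢ Finset.range (n + 2)).Nonempty :=
    ⟨(0, 0), by simp⟩
  set M := (Finset.range (n + 2) ×ˢ Finset.range (n + 2)).sup' hGne
    (fun x => u x.1 x.2) with hMdef
  have hle : ∀ x y, x ≤ n + 1 → y ≤ n + 1 → u x y ≤ M := by
    intro x y hx hy
    exact Finset.le_sup' (f := fun x : ℕ × ℕ => u x.1 x.2) (b := (x, y))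
      (by simp only [Finset.mem_product, Finset.mem_range]; omega)
  have claim : ∀ x, ∀ y, x ≤ n + 1 → y ≤ n + 1 → u x y = M →
      ∃ z : ℕ × ℕ, z ∈ boundarySet n ∧ u z.1 z.2 = M := by
    intro x
    induction x using Nat.strong_induction_on with
    | _ x ih =>
      intro y hx hy hxy
      by_cases hbd : x = 0 ∨ x = n + 1 ∨ y = 0 ∨ y = n + 1
      · refine ⟨(x, y), Finset.mem_filter.mpr ⟨Finset.mem_product.mpr
          ⟨Finset.mem_range.mpr (by omega), Finset.mem_range.mpr (by omega)⟩, hbd⟩, hxy⟩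
      · push_neg at hbd
        obtain ⟨x', y', hlt, hx', hy', hval⟩ := descent n p q u M hn2 hp hq hmesh hu hle
          x y (by omega) (by omega) (by omega) (by omega) hxy
        exact ih x' hlt y' hx' hy' hval
  obtain ⟨z, hz, hz2⟩ := Finset.exists_mem_eq_sup' hGne (fun x : ℕ × ℕ => u x.1 x.2)
  have hzr : z.1 ≤ n + 1 ∧ z.2 ≤ n + 1 := by
    simp only [Finset.mem_product, Finset.mem_range] at hz; omega
  obtain ⟨w, hw, hwv⟩ := claim z.1 z.2 hzr.1 hzr.2 (by rw [hMdef]; exact hz2.symm)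
  have h2 : M ≤ (boundarySet n).sup' (boundarySet_nonempty n) (fun x => u x.1 x.2) :=
    hwv ▸ Finset.le_sup' (fun x : ℕ × ℕ => u x.1 x.2) hw
  exact le_trans (hle i j (by omega) (by omega)) (le_trans h2 (le_max_right _ _))
end
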